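/- arXiv:1709.01996 — 2 statements merged into one kernel-verified Lean document; each statement's English description precedes it below -/
import Mathlib

section
/- (Monotone density theorem) Suppose U(x) = ∫_0^x u(y) dy with u ultimately monotone, and lim_{n→∞} U(r^n z)/((r^n z)^ρ ℓ(r^n z)) = p(z) at all continuity points z of p ∈ P_r, with ρ > 0 and ℓ slowly varying at infinity. Then p = B_ρ p₀ for some p₀ ∈ P_r (in particular p is differentiable), and lim_{n→∞} u(r^n z)/((r^n z)^{ρ−1} ℓ(r^n z)) = p₀(z) at all continuity points z of p₀. -/
open Filter Set Real
open Topology MeasureTheory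

/-- `p ∈ P_r`: positive, bounded, right-continuous, bounded away from `0` on `[1,r]`,
and logarithmically periodic with period `r`. -/
def MemP (r : ℝ) (p : ℝ → ℝ) : Prop :=
  (∀ x > (0:ℝ), 0 < p x) ∧
  (∃ M : ℝ, ∀ x > (0:ℝ), p x ≤ M) ∧
  (∀ x > (0:ℝ), ContinuousWithinAt p (Set.Ici x) x) ∧
  (∃ c > (0:ℝ), ∀ x ∈ Set.Icc (1:ℝ) r, c ≤ p x) ∧
  (∀ x > (0:ℝ), p (x * r) = p x)

/-- `ℓ` is slowly varying at infinity (and eventually positive). -/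
def SlowlyVarying (l : ℝ → ℝ) : Prop :=
  (∀ᶠ x in Filter.atTop, 0 < l x) ∧
  ∀ lam > (0:ℝ),
    Filter.Tendsto (fun x : ℝ => l (lam * x) / l x) Filter.atTop (nhds 1)

/-- `f ∈ RL(p, r, ρ)` with slowly varying part `ℓ`:
`f(x rⁿ)/((x rⁿ)^ρ ℓ(x rⁿ)) → p(x)` at every continuity point `x > 0` of `p`. -/
def MemRL (f : ℝ → ℝ) (p : ℝ → ℝ) (r ρ : ℝ) (l : ℝ → ℝ) : Prop :=
  ∀ x > (0:ℝ), ContinuousAt p x →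
    Filter.Tendsto (fun n : ℕ => f (x * r^n) / ((x * r^n) ^ ρ * l (x * r^n)))
      Filter.atTop (nhds (p x))

/-- `f` is ultimately monotone: monotone (in either direction) on some `[x₀, ∞)`. -/
def UltimatelyMonotone (f : ℝ → ℝ) : Prop :=
  ∃ x₀ : ℝ, MonotoneOn f (Set.Ici x₀) ∨ AntitoneOn f (Set.Ici x₀)

lemma osc_step {f : ℝ → ℝ} (hf : ∀ x : ℝ, ContinuousWithinAt f (Ici x) x)
    {α β ε : ℝ} (hαβ : α < β) (hε : 0 < ε) :
    ∃ γ δ : ℝ, α < γ ∧ γ < δ ∧ δ < β ∧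
      ∀ y ∈ Ioo γ δ, ∀ y' ∈ Ioo γ δ, |f y - f y'| ≤ ε := by
  set E : ℕ → Set ℝ := fun n => {x | ∀ y ∈ Icc x (x + 1/(n+1)), |f y - f x| ≤ ε/3} with hE
  have hcover : (⋃ n, closure (E n)) = univ := by
    refine eq_univ_of_forall fun x => ?_
    have h2 : ∀ᶠ y in 𝓝[Ici x] x, |f y - f x| ≤ ε/3 := by
      have := hf x (Metric.closedBall_mem_nhds (f x) (by positivity : (0:ℝ) < ε/3))
      filter_upwards [this] with y hy
      simpa [Real.dist_eq] using hy
    obtain ⟨w, hw⟩ := exists_gt x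
    obtain ⟨u, hu, huf⟩ := (nhdsGE_basis_of_exists_gt ⟨w, hw⟩).eventually_iff.1 h2
    obtain ⟨n, hn⟩ := exists_nat_one_div_lt (show (0:ℝ) < u - x by linarith)
    have hxE : x ∈ E n := by
      intro y hy
      exact huf ⟨hy.1, lt_of_le_of_lt hy.2 (by linarith [hn])⟩
    exact mem_iUnion.2 ⟨n, subset_closure hxE⟩
  have hd : Dense (⋃ n, interior (closure (E n))) :=
    dense_iUnion_interior_of_closed (fun n => isClosed_closure) hcover
  obtain ⟨w, hwmem, hwo⟩ := hd.exists_mem_open isOpen_Ioo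
    (nonempty_Ioo.2 hαβ)
  obtain ⟨n, hwn⟩ := mem_iUnion.1 hwmem
  obtain ⟨η, hη, hball⟩ := Metric.mem_nhds_iff.1 (mem_interior_iff_mem_nhds.1 hwn)
  set m : ℝ := min η (min (1/(2*(n+1))) (min (w - α) (β - w))) with hm
  have hm0 : 0 < m := by
    refine lt_min hη (lt_min (by positivity) (lt_min ?_ ?_)) <;> [linarith [hwo.1]; linarith [hwo.2]]
  refine ⟨w - m/2, w + m/2, ?_, by linarith, ?_, ?_⟩
  · have : m ≤ w - α := (min_le_right _ _).trans ((min_le_right _ _).trans (min_le_left _ _))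
    linarith
  · have : m ≤ β - w := (min_le_right _ _).trans ((min_le_right _ _).trans (min_le_right _ _))
    linarith
  · intro y hy y' hy'
    have hsub : Ioo (w - m/2) (w + m/2) ⊆ closure (E n) := by
      intro t ht
      apply hball
      have hmη : m ≤ η := min_le_left _ _
      simp only [Metric.mem_ball, Real.dist_eq, abs_lt]
      constructor <;> linarith [ht.1, ht.2]
    -- pick x ∈ E n below min y y'
    have hmin : w - m/2 < min y y' := lt_min hy.1 hy'.1
    obtain ⟨t, ht⟩ := nonempty_Ioo.2 hmin
    have htc : t ∈ closure (E n) := hsub ⟨ht.1, lt_of_lt_of_le ht.2 (by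
      simp only [min_le_iff]; left; linarith [hy.2])⟩
    obtain ⟨x, hxI, hxE⟩ := mem_closure_iff.1 htc (Ioo (w - m/2) (min y y')) isOpen_Ioo ht
    have hlen : m ≤ 1/(n+1) := by
      have h2 : m ≤ 1/(2*(n+1)) := (min_le_right _ _).trans (min_le_left _ _)
      have h1 : (0:ℝ) < (n:ℝ)+1 := by positivity
      have h3 : (1:ℝ)/(2*((n:ℝ)+1)) ≤ 1/((n:ℝ)+1) := by
        apply one_div_le_one_div_of_le h1; linarith
      linarith
    have hxlt : x < min y y' := hxI.2
    have hxgt : w - m/2 < x := hxI.1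
    have hyx : y ∈ Icc x (x + 1/(n+1)) := by
      constructor
      · linarith [min_le_left y y']
      · linarith [hlen, hy.2]
    have hy'x : y' ∈ Icc x (x + 1/(n+1)) := by
      constructor
      · linarith [min_le_right y y']
      · linarith [hlen, hy'.2]
    have h1 := hxE y hyx
    have h2 := hxE y' hy'x
    calc |f y - f y'| ≤ |f y - f x| + |f x - f y'| := abs_sub_le _ _ _
      _ ≤ ε/3 + ε/3 := add_le_add h1 (by rwa [abs_sub_comm])
      _ ≤ ε := by linarith


lemma rc_dense_cont {f : ℝ → ℝ} (hf : ∀ x : ℝ, ContinuousWithinAt f (Ici x) x)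
    {a b : ℝ} (hab : a < b) : ∃ z ∈ Ioo a b, ContinuousAt f z := by
  have step : ∀ (c : ℝ × ℝ) (k : ℕ), ∃ d : ℝ × ℝ, c.1 < c.2 →
      (c.1 < d.1 ∧ d.1 < d.2 ∧ d.2 < c.2 ∧
        ∀ y ∈ Ioo d.1 d.2, ∀ y' ∈ Ioo d.1 d.2, |f y - f y'| ≤ 1/(k+1)) := by
    intro c k
    by_cases h : c.1 < c.2
    · obtain ⟨γ, δ, h1, h2, h3, h4⟩ := osc_step hf h (by positivity : (0:ℝ) < 1/(k+1))
      exact ⟨(γ, δ), fun _ => ⟨h1, h2, h3, h4⟩⟩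
    · exact ⟨(0, 1), fun h' => absurd h' h⟩
  choose F hF using step
  set G : ℕ → ℝ × ℝ := fun k => Nat.rec (a, b) (fun k ih => F ih k) k with hG
  have hGsucc : ∀ k, G (k+1) = F (G k) k := fun k => rfl
  have key : ∀ k, (G k).1 < (G k).2 := by
    intro k
    induction k with
    | zero => exact hab
    | succ k ih =>
      rw [hGsucc]
      obtain ⟨h1, h2, h3, _⟩ := hF (G k) k ih
      exact h2
  have props : ∀ k, (G k).1 < (G (k+1)).1 ∧ (G (k+1)).2 < (G k).2 ∧
      ∀ y ∈ Ioo (G (k+1)).1 (G (k+1)).2, ∀ y' ∈ Ioo (G (k+1)).1 (G (k+1)).2,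
        |f y - f y'| ≤ 1/(k+1) := by
    intro k
    rw [hGsucc]
    obtain ⟨h1, h2, h3, h4⟩ := hF (G k) k (key k)
    exact ⟨h1, h3, h4⟩
  set A : ℕ → ℝ := fun k => (G k).1 with hA
  set B : ℕ → ℝ := fun k => (G k).2 with hB
  have hAmono : StrictMono A := strictMono_nat_of_lt_succ fun k => (props k).1
  have hBanti : StrictAnti B := strictAnti_nat_of_succ_lt fun k => (props k).2.1
  have hAB : ∀ j k, A j < B k := by
    intro j k
    rcases le_total j k with h | h
    · exact lt_of_le_of_lt (hAmono.monotone h) (key k)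
    · exact lt_of_lt_of_le (key j) (hBanti.antitone h)
  have hbdd : BddAbove (Set.range A) := ⟨b, by rintro x ⟨j, rfl⟩; exact (hAB j 0).le⟩
  set z : ℝ := sSup (Set.range A) with hz
  have hAz : ∀ k, A k < z :=
    fun k => lt_of_lt_of_le (hAmono (Nat.lt_succ_self k)) (le_csSup hbdd ⟨k+1, rfl⟩)
  have hzB : ∀ k, z < B k := by
    intro k
    have h1 : z ≤ B (k+1) := csSup_le ⟨A 0, ⟨0, rfl⟩⟩ (by rintro x ⟨j, rfl⟩; exact (hAB j (k+1)).le)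
    exact lt_of_le_of_lt h1 (hBanti (Nat.lt_succ_self k))
  refine ⟨z, ⟨hAz 0, hzB 0⟩, ?_⟩
  rw [Metric.continuousAt_iff]
  intro ε hε
  obtain ⟨k, hk⟩ := exists_nat_one_div_lt hε
  refine ⟨min (z - A (k+1)) (B (k+1) - z),
    lt_min (by linarith [hAz (k+1)]) (by linarith [hzB (k+1)]), ?_⟩
  intro y hy
  rw [Real.dist_eq] at hy
  have hy1 : A (k+1) < y := by
    have := abs_lt.1 hy
    have h2 : min (z - A (k+1)) (B (k+1) - z) ≤ z - A (k+1) := min_le_left _ _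
    linarith [this.1]
  have hy2 : y < B (k+1) := by
    have := abs_lt.1 hy
    have h2 : min (z - A (k+1)) (B (k+1) - z) ≤ B (k+1) - z := min_le_right _ _
    linarith [this.2]
  have := (props k).2.2 y ⟨hy1, hy2⟩ z ⟨hAz (k+1), hzB (k+1)⟩
  rw [Real.dist_eq]
  exact lt_of_le_of_lt this hk


/-- adjacent slope monotonicity on `(0,∞)` -/
def SlopeM (G : ℝ → ℝ) : Prop :=
  ∀ ⦃a b c : ℝ⦄, 0 < a → a < b → b < c → slope G a b ≤ slope G b c

noncomputable def rd (G : ℝ → ℝ) (x : ℝ) : ℝ := sInf ((fun y => slope G x y) '' Ioi x)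

section slopeM
variable {G : ℝ → ℝ}

lemma slope_pos_comm (a b : ℝ) : slope G a b = slope G b a := slope_comm G a b

lemma sl3_left (hsm : SlopeM G) {a b c : ℝ} (ha : 0 < a) (hab : a < b) (hbc : b < c) :
    slope G a b ≤ slope G a c := by
  have h := hsm ha hab hbc
  simp only [slope_def_field] at h ⊢
  rw [div_le_div_iff₀ (by linarith) (by linarith)] at h ⊢
  nlinarith
lemma sl3_right (hsm : SlopeM G) {a b c : ℝ} (ha : 0 < a) (hab : a < b) (hbc : b < c) :
    slope G a c ≤ slope G b c := by
  have h := hsm ha hab hbc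
  simp only [slope_def_field] at h ⊢
  rw [div_le_div_iff₀ (by linarith) (by linarith)] at h ⊢
  nlinarith

lemma rd_bddBelow (hsm : SlopeM G) {x : ℝ} (hx : 0 < x) : BddBelow ((fun y => slope G x y) '' Ioi x) := by
  refine ⟨slope G (x/2) x, ?_⟩
  rintro s ⟨y, hy, rfl⟩
  exact hsm (by linarith) (by linarith) hy

lemma rd_le (hsm : SlopeM G) {x y : ℝ} (hx : 0 < x) (hxy : x < y) : rd G x ≤ slope G x y :=
  csInf_le (rd_bddBelow hsm hx) ⟨y, hxy, rfl⟩

lemma le_rd (hsm : SlopeM G) {a x : ℝ} (ha : 0 < a) (hax : a < x) : slope G a x ≤ rd G x := by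
  refine le_csInf ⟨slope G x (x+1), ⟨x+1, mem_Ioi.2 (by linarith), rfl⟩⟩ ?_
  rintro s ⟨y, hy, rfl⟩
  rw [mem_Ioi] at hy
  exact (sl3_left hsm ha hax hy).trans (sl3_right hsm ha hax hy)

lemma rd_mono (hsm : SlopeM G) {x y : ℝ} (hx : 0 < x) (hxy : x < y) : rd G x ≤ rd G y :=
  (rd_le hsm hx hxy).trans (le_rd hsm hx hxy)

lemma tendsto_slope_rd (hsm : SlopeM G) {x : ℝ} (hx : 0 < x) :
    Tendsto (slope G x) (𝓝[>] x) (𝓝 (rd G x)) := by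
  rw [tendsto_order]
  constructor
  · intro w hw
    filter_upwards [self_mem_nhdsWithin] with y hy
    exact lt_of_lt_of_le hw (rd_le hsm hx hy)
  · intro w hw
    obtain ⟨s, ⟨y₀, hy₀, rfl⟩, hs⟩ :=
      (csInf_lt_iff (rd_bddBelow hsm hx) ⟨slope G x (x+1), ⟨x+1, mem_Ioi.2 (by linarith), rfl⟩⟩).1 hw
    rw [mem_Ioi] at hy₀
    filter_upwards [Ioo_mem_nhdsGT_of_mem (left_mem_Ico.2 hy₀)] with y hy
    rcases eq_or_lt_of_le hy.2.le with h | h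
    · exact h ▸ hs
    · exact lt_of_le_of_lt (sl3_left hsm hx hy.1 h) hs

lemma rd_hasDeriv (hsm : SlopeM G) {x : ℝ} (hx : 0 < x) : HasDerivWithinAt G (rd G x) (Ioi x) x := by
  rw [hasDerivWithinAt_iff_tendsto_slope]
  rw [diff_singleton_eq_self (by simp : x ∉ Ioi x)]
  exact tendsto_slope_rd hsm hx

lemma G_contAt (hsm : SlopeM G) {x : ℝ} (hx : 0 < x) : ContinuousAt G x := by
  set L := slope G (x/4) (x/2) with hL
  set U := slope G (2*x) (4*x) with hU
  set K := max |L| |U| with hK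
  have hbound : ∀ y, x/2 < y → y < 2*x → |G y - G x| ≤ K * |y - x| := by
    intro y h1 h2
    rcases lt_trichotomy y x with h | h | h
    · have c1 : L ≤ slope G y x :=
        (hsm (by linarith) (by linarith) h1).trans (hsm (by linarith) h1 h)
      have c2 : slope G y x ≤ U :=
        (hsm (by linarith) h (by linarith)).trans (hsm hx (by linarith) (by linarith))
      have hne : y - x ≠ 0 := sub_ne_zero_of_ne (ne_of_lt h)
      have heq : G y - G x = slope G x y * (y - x) := by
        rw [slope_def_field, div_mul_cancel₀ _ hne]
      rw [heq, abs_mul]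
      gcongr
      rw [slope_comm]
      exact abs_le.2 ⟨((neg_le_neg (le_max_left |L| |U|)).trans (neg_abs_le L)).trans c1,
        c2.trans ((le_abs_self U).trans (le_max_right _ _))⟩
    · subst h; simp
    · have c1 : L ≤ slope G x y :=
        (hsm (by linarith) (by linarith) (by linarith)).trans (hsm (by linarith) (by linarith) h)
      have c2 : slope G x y ≤ U :=
        (hsm hx h h2).trans (hsm (by linarith) h2 (by linarith))
      have hne : y - x ≠ 0 := sub_ne_zero_of_ne (ne_of_gt h)
      have heq : G y - G x = slope G x y * (y - x) := by
        rw [slope_def_field, div_mul_cancel₀ _ hne]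
      rw [heq, abs_mul]
      gcongr
      exact abs_le.2 ⟨((neg_le_neg (le_max_left |L| |U|)).trans (neg_abs_le L)).trans c1,
        c2.trans ((le_abs_self U).trans (le_max_right _ _))⟩
  rw [Metric.continuousAt_iff]
  intro ε hε
  have hK0 : 0 ≤ K := le_trans (abs_nonneg L) (le_max_left _ _)
  refine ⟨min (ε/(K+1)) (x/2), lt_min (by positivity) (by linarith), ?_⟩
  intro y hy
  rw [Real.dist_eq] at hy
  have h1 : |y - x| < x/2 := lt_of_lt_of_le hy (min_le_right _ _)
  have h2 : |y - x| < ε/(K+1) := lt_of_lt_of_le hy (min_le_left _ _)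
  have h3 := abs_lt.1 h1
  rw [Real.dist_eq]
  calc |G y - G x| ≤ K * |y - x| := hbound y (by linarith) (by linarith)
    _ ≤ K * (ε/(K+1)) := by gcongr
    _ = (K/(K+1)) * ε := by ring
    _ < 1 * ε := by
        apply mul_lt_mul_of_pos_right _ hε
        rw [div_lt_one (by positivity)]; linarith
    _ = ε := one_mul ε

lemma rd_rightCont (hsm : SlopeM G) {x : ℝ} (hx : 0 < x) : ContinuousWithinAt (rd G) (Ici x) x := by
  rw [Metric.continuousWithinAt_iff]
  intro ε hε
  have hlt : rd G x < rd G x + ε/2 := by linarith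
  obtain ⟨s, ⟨ζ, hζ, rfl⟩, hs⟩ :=
    (csInf_lt_iff (rd_bddBelow hsm hx) ⟨slope G x (x+1), ⟨x+1, mem_Ioi.2 (by linarith), rfl⟩⟩).1 hlt
  rw [mem_Ioi] at hζ
  -- h y := slope G y ζ continuous at x
  have hc : ContinuousAt (fun y => slope G y ζ) x := by
    have hfe : (fun y => slope G y ζ) = fun y => (G ζ - G y) / (ζ - y) :=
      funext fun y => slope_def_field G y ζ
    rw [hfe]
    apply ContinuousAt.div
    · exact continuousAt_const.sub (G_contAt hsm hx)
    · exact continuousAt_const.sub continuousAt_id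
    · simp only [ne_eq, sub_ne_zero]; intro hE; exact absurd hE (ne_of_gt hζ)
  rw [Metric.continuousAt_iff] at hc
  obtain ⟨δ₁, hδ₁, hδ⟩ := hc (ε/2) (by linarith)
  refine ⟨min δ₁ ((ζ - x)/2), lt_min hδ₁ (by linarith), ?_⟩
  intro y hy hyd
  rw [Real.dist_eq] at hyd ⊢
  rw [mem_Ici] at hy
  rcases eq_or_lt_of_le hy with rfl | hxy
  · simpa using hε
  · have h1 : |y - x| < δ₁ := lt_of_lt_of_le hyd (min_le_left _ _)
    have h2 : |y - x| < (ζ - x)/2 := lt_of_lt_of_le hyd (min_le_right _ _)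
    have hyζ : y < ζ := by have := (abs_lt.1 h2).2; linarith
    have hup : rd G y ≤ slope G y ζ := rd_le hsm (by linarith) hyζ
    have hlo : rd G x ≤ rd G y := rd_mono hsm hx hxy
    have := hδ h1  -- |slope G y ζ - slope G x ζ| < ε/2  (dist form)
    rw [Real.dist_eq] at this
    have h4 : slope G y ζ < rd G x + ε := by
      have := (abs_lt.1 this).2
      linarith [hs]
    rw [abs_lt]
    constructor <;> linarith
  done
end slopeM


lemma rd_scale {G : ℝ → ℝ} (hsm : SlopeM G) {r c : ℝ} (hr : 0 < r) (hsc : ∀ x, 0 < x → G (r*x) = c * G x)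
    {x : ℝ} (hx : 0 < x) : r * rd G (r*x) = c * rd G x := by
  have h1 := rd_hasDeriv hsm (mul_pos hr hx)
  have hmul : HasDerivAt (fun y : ℝ => r*y) r x := by
    simpa using (hasDerivAt_id x).const_mul r
  have hcomp : HasDerivWithinAt (G ∘ fun y => r*y) (rd G (r*x) * r) (Ioi x) x :=
    HasDerivWithinAt.comp x h1 hmul.hasDerivWithinAt
      (fun y hy => by simpa [mem_Ioi] using mul_lt_mul_of_pos_left hy hr)
  have hcong : HasDerivWithinAt (fun y => c * G y) (rd G (r*x) * r) (Ioi x) x := by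
    apply hcomp.congr_of_eventuallyEq ?_ ((hsc x hx).symm)
    filter_upwards [self_mem_nhdsWithin] with y hy
    exact (hsc y (lt_trans hx hy)).symm
  have h2 : HasDerivWithinAt (fun y => c * G y) (c * rd G x) (Ioi x) x :=
    (rd_hasDeriv hsm hx).const_mul c
  have h3 := UniqueDiffWithinAt.eq_deriv _ (uniqueDiffWithinAt_Ioi x) hcong h2
  linarith [h3]



lemma slope_neg' (q : ℝ → ℝ) (a b : ℝ) : slope (fun y => -(q y)) a b = -(slope q a b) := by
  simp [slope_def_field]; ring


lemma aux_ratio {l : ℝ → ℝ} {r ρ a z P : ℝ} (hr : 1 < r) (hl : SlowlyVarying l)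
    (ha : 0 < a) (hz : 0 < z) {A : ℕ → ℝ}
    (htend : Tendsto (fun n : ℕ => A n / ((r^n*a)^ρ * l (r^n*a))) atTop (𝓝 P)) :
    Tendsto (fun n : ℕ => A n / ((r^n*z)^(ρ-1) * l (r^n*z) * r^n)) atTop
      (𝓝 (P * (a^ρ * z^(1-ρ)))) := by
  have hr0 : (0:ℝ) < r := by linarith
  have hrn : Tendsto (fun n : ℕ => (r:ℝ)^n) atTop atTop :=
    tendsto_pow_atTop_atTop_of_one_lt hr
  have htpos : ∀ n : ℕ, (0:ℝ) < r^n := fun n => pow_pos hr0 n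
  have ev0 : ∀ᶠ n : ℕ in atTop, 0 < l (r^n) := hrn.eventually hl.1
  have eva : ∀ᶠ n : ℕ in atTop, 0 < l (r^n*a) :=
    (hrn.atTop_mul_const ha).eventually hl.1
  have evz : ∀ᶠ n : ℕ in atTop, 0 < l (r^n*z) :=
    (hrn.atTop_mul_const hz).eventually hl.1
  have hla : Tendsto (fun n : ℕ => l (r^n*a) / l (r^n)) atTop (𝓝 1) := by
    have h := (hl.2 a ha).comp hrn
    exact h.congr (fun n => by simp only [Function.comp_apply, mul_comm])
  have hlz : Tendsto (fun n : ℕ => l (r^n*z) / l (r^n)) atTop (𝓝 1) := by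
    have h := (hl.2 z hz).comp hrn
    exact h.congr (fun n => by simp only [Function.comp_apply, mul_comm])
  have hratio : Tendsto (fun n : ℕ => l (r^n*a) / l (r^n*z)) atTop (𝓝 1) := by
    have h := hla.div hlz one_ne_zero
    rw [div_one] at h  -- limit 1/1
    apply h.congr'
    filter_upwards [ev0, evz] with n h0 hz'
    rw [Pi.div_apply]
    field_simp
  have hconst : Tendsto (fun _ : ℕ => a^ρ * z^(1-ρ)) atTop (𝓝 (a^ρ * z^(1-ρ))) :=
    tendsto_const_nhds
  have hmain := htend.mul (hconst.mul hratio)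
  rw [mul_one] at hmain
  apply hmain.congr'
  filter_upwards [eva, evz] with n ha' hz'
  have ht := htpos n
  have h1 : ((r:ℝ)^n*a)^ρ = (r^n:ℝ)^ρ * a^ρ := mul_rpow ht.le ha.le
  have h2 : ((r:ℝ)^n*z)^(ρ-1) = (r^n:ℝ)^(ρ-1) * z^(ρ-1) := mul_rpow ht.le hz.le
  have h3 : ((r:ℝ)^n:ℝ)^(ρ-1) = (r^n:ℝ)^ρ / r^n := by
    rw [Real.rpow_sub ht, Real.rpow_one]
  have h4 : z^(1-ρ) = z / z^ρ := by rw [Real.rpow_sub hz, Real.rpow_one]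
  have h5 : z^(ρ-1) = z^ρ / z := by rw [Real.rpow_sub hz, Real.rpow_one]
  rw [h1, h2, h3, h4, h5]
  have hne1 : ((r:ℝ)^n:ℝ)^ρ ≠ 0 := (rpow_pos_of_pos ht ρ).ne'
  have hne2 : z^ρ ≠ 0 := (rpow_pos_of_pos hz ρ).ne'
  have hne3 : a^ρ ≠ 0 := (rpow_pos_of_pos ha ρ).ne'
  field_simp


lemma slope_ext {q : ℝ → ℝ} {D : Set ℝ}
    (hrc : ∀ x : ℝ, 0 < x → ContinuousWithinAt q (Ici x) x)
    (hdense : ∀ α β : ℝ, 0 < α → α < β → ∃ t ∈ Ioo α β, t ∈ D)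
    (hcp : ∀ a b c : ℝ, a ∈ D → b ∈ D → c ∈ D → 0 < a → a < b → b < c →
      slope q a b ≤ slope q b c) : SlopeM q := by
  intro a b c ha hab hbc
  have hchoice : ∀ (x w : ℝ) (k : ℕ), 0 < x → 0 < w →
      ∃ t, t ∈ Ioo x (x + w/(k+1)) ∧ t ∈ D := by
    intro x w k hx hw
    have h1 : x < x + w/(k+1) := by
      have h2 : (0:ℝ) < w/(k+1) := by positivity
      linarith
    exact hdense x _ hx h1
  choose as' has1 has2 using fun k => hchoice a (b-a) k ha (by linarith)
  choose bs hbs1 hbs2 using fun k => hchoice b (c-b) k (by linarith) (by linarith)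
  choose cs hcs1 hcs2 using fun k => hchoice c 1 k (by linarith) one_pos
  have hfrac : ∀ (w : ℝ) (k : ℕ), 0 < w → w/((k:ℝ)+1) ≤ w := by
    intro w k hw
    rw [div_le_iff₀ (by positivity)]
    nlinarith [Nat.cast_nonneg (α := ℝ) k]
  have hord : ∀ k, 0 < as' k ∧ as' k < bs k ∧ bs k < cs k := by
    intro k
    refine ⟨lt_trans ha (has1 k).1, ?_, ?_⟩
    · have h1 := (has1 k).2
      have h2 := hfrac (b-a) k (by linarith)
      have h3 := (hbs1 k).1
      linarith
    · have h1 := (hbs1 k).2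
      have h2 := hfrac (c-b) k (by linarith)
      have h3 := (hcs1 k).1
      linarith
  have hineq : ∀ k, slope q (as' k) (bs k) ≤ slope q (bs k) (cs k) := fun k =>
    hcp _ _ _ (has2 k) (hbs2 k) (hcs2 k) (hord k).1 (hord k).2.1 (hord k).2.2
  -- limits
  have hone : Tendsto (fun k : ℕ => 1/((k:ℝ)+1)) atTop (𝓝 0) :=
    tendsto_one_div_add_atTop_nhds_zero_nat
  have hseq : ∀ (x w : ℝ) (s : ℕ → ℝ), 0 < x → 0 < w →
      (∀ k : ℕ, s k ∈ Ioo x (x + w/((k:ℝ)+1))) → Tendsto (fun k => q (s k)) atTop (𝓝 (q x)) := by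
    intro x w s hx hw hs
    have hts : Tendsto s atTop (𝓝 x) := by
      have hub : Tendsto (fun k : ℕ => x + w * (1/((k:ℝ)+1))) atTop (𝓝 (x + w * 0)) :=
        tendsto_const_nhds.add (tendsto_const_nhds.mul hone)
      rw [mul_zero, add_zero] at hub
      refine tendsto_of_tendsto_of_tendsto_of_le_of_le' tendsto_const_nhds hub
        (Eventually.of_forall fun k => (hs k).1.le) (Eventually.of_forall fun k => ?_)
      have := (hs k).2.le
      calc s k ≤ x + w/((k:ℝ)+1) := this
        _ = x + w * (1/((k:ℝ)+1)) := by ring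
    have hwithin : Tendsto s atTop (𝓝[Ici x] x) := by
      rw [tendsto_nhdsWithin_iff]
      exact ⟨hts, Eventually.of_forall fun k => (hs k).1.le⟩
    exact ((hrc x hx).tendsto).comp hwithin
  have hqa := hseq a (b-a) as' ha (by linarith) has1
  have hqb := hseq b (c-b) bs (by linarith) (by linarith) hbs1
  have hqc := hseq c 1 cs (by linarith) one_pos hcs1
  have hta : Tendsto as' atTop (𝓝 a) := by
    have hub : Tendsto (fun k : ℕ => a + (b-a) * (1/((k:ℝ)+1))) atTop (𝓝 (a + (b-a) * 0)) :=
      tendsto_const_nhds.add (tendsto_const_nhds.mul hone)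
    rw [mul_zero, add_zero] at hub
    refine tendsto_of_tendsto_of_tendsto_of_le_of_le' tendsto_const_nhds hub
      (Eventually.of_forall fun k => (has1 k).1.le) (Eventually.of_forall fun k => ?_)
    calc as' k ≤ a + (b-a)/((k:ℝ)+1) := (has1 k).2.le
      _ = a + (b-a) * (1/((k:ℝ)+1)) := by ring
  have htb : Tendsto bs atTop (𝓝 b) := by
    have hub : Tendsto (fun k : ℕ => b + (c-b) * (1/((k:ℝ)+1))) atTop (𝓝 (b + (c-b) * 0)) :=
      tendsto_const_nhds.add (tendsto_const_nhds.mul hone)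
    rw [mul_zero, add_zero] at hub
    refine tendsto_of_tendsto_of_tendsto_of_le_of_le' tendsto_const_nhds hub
      (Eventually.of_forall fun k => (hbs1 k).1.le) (Eventually.of_forall fun k => ?_)
    calc bs k ≤ b + (c-b)/((k:ℝ)+1) := (hbs1 k).2.le
      _ = b + (c-b) * (1/((k:ℝ)+1)) := by ring
  have htc : Tendsto cs atTop (𝓝 c) := by
    have hub : Tendsto (fun k : ℕ => c + 1 * (1/((k:ℝ)+1))) atTop (𝓝 (c + 1 * 0)) :=
      tendsto_const_nhds.add (tendsto_const_nhds.mul hone)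
    rw [mul_zero, add_zero] at hub
    refine tendsto_of_tendsto_of_tendsto_of_le_of_le' tendsto_const_nhds hub
      (Eventually.of_forall fun k => (hcs1 k).1.le) (Eventually.of_forall fun k => ?_)
    calc cs k ≤ c + 1/((k:ℝ)+1) := (hcs1 k).2.le
      _ = c + 1 * (1/((k:ℝ)+1)) := by ring
  have hsl1 : Tendsto (fun k => slope q (as' k) (bs k)) atTop (𝓝 (slope q a b)) := by
    simp only [slope_def_field]
    exact (hqb.sub hqa).div (htb.sub hta) (by intro h; rw [sub_eq_zero] at h; linarith)
  have hsl2 : Tendsto (fun k => slope q (bs k) (cs k)) atTop (𝓝 (slope q b c)) := by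
    simp only [slope_def_field]
    exact (hqc.sub hqb).div (htc.sub htb) (by intro h; rw [sub_eq_zero] at h; linarith)
  exact le_of_tendsto_of_tendsto' hsl1 hsl2 hineq



lemma int_ub {u : ℝ → ℝ} {x₀ A B : ℝ} (hmono : MonotoneOn u (Ici x₀)) (hA : x₀ ≤ A)
    (hAB : A ≤ B) (hint : IntervalIntegrable u volume A B) :
    (∫ y in A..B, u y) ≤ u B * (B - A) ∧ u A * (B - A) ≤ ∫ y in A..B, u y := by
  constructor
  · have h := intervalIntegral.integral_mono_on (μ := volume) hAB hint
      intervalIntegrable_const (g := fun _ => u B)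
      (fun y hy => hmono (le_trans hA hy.1 : y ∈ Ici x₀) (le_trans hA hAB : B ∈ Ici x₀) hy.2)
    rwa [intervalIntegral.integral_const, smul_eq_mul, mul_comm] at h
  · have h := intervalIntegral.integral_mono_on (μ := volume) hAB
      intervalIntegrable_const hint (f := fun _ => u A)
      (fun y hy => hmono (hA : A ∈ Ici x₀) (le_trans hA hy.1 : y ∈ Ici x₀) hy.1)
    rwa [intervalIntegral.integral_const, smul_eq_mul, mul_comm] at h

lemma sandwich_aux {u l : ℝ → ℝ} {x₀ r ρ a b : ℝ} (hr : 1 < r)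
    (hu : MonotoneOn u (Ici x₀))
    (hint : ∀ A B : ℝ, 0 ≤ A → A ≤ B → IntervalIntegrable u volume A B)
    (hl : ∀ c : ℝ, 0 < c → ∀ᶠ n : ℕ in atTop, 0 < l (r^n * c))
    (ha : 0 < a) (hab : a < b) :
    (∀ᶠ n : ℕ in atTop,
      ((∫ y in (0:ℝ)..(r^n*b), u y) - ∫ y in (0:ℝ)..(r^n*a), u y) /
          ((r^n*b)^(ρ-1) * l (r^n*b) * r^n * (b-a))
        ≤ u (r^n*b) / ((r^n*b)^(ρ-1) * l (r^n*b))) ∧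
    (∀ᶠ n : ℕ in atTop,
      u (r^n*a) / ((r^n*a)^(ρ-1) * l (r^n*a)) ≤
        ((∫ y in (0:ℝ)..(r^n*b), u y) - ∫ y in (0:ℝ)..(r^n*a), u y) /
          ((r^n*a)^(ρ-1) * l (r^n*a) * r^n * (b-a))) := by
  have hr0 : (0:ℝ) < r := by linarith
  have hrn : Tendsto (fun n : ℕ => (r:ℝ)^n) atTop atTop :=
    tendsto_pow_atTop_atTop_of_one_lt hr
  have hx₀ev : ∀ᶠ n : ℕ in atTop, x₀ ≤ r^n * a :=
    (hrn.atTop_mul_const ha).eventually (eventually_ge_atTop x₀)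
  have key : ∀ n : ℕ, x₀ ≤ r^n * a →
      ((∫ y in (0:ℝ)..(r^n*b), u y) - ∫ y in (0:ℝ)..(r^n*a), u y) = ∫ y in (r^n*a)..(r^n*b), u y := by
    intro n hn
    have ht : (0:ℝ) < r^n := pow_pos hr0 n
    have ha' : (0:ℝ) ≤ r^n * a := (mul_pos ht (by linarith)).le
    have h1 := intervalIntegral.integral_add_adjacent_intervals
      (hint 0 (r^n*a) le_rfl ha') (hint (r^n*a) (r^n*b) ha' (by nlinarith))
    linarith
  constructor
  · filter_upwards [hx₀ev, hl b (by linarith)] with n h1 h2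
    have ht : (0:ℝ) < r^n := pow_pos hr0 n
    have hAB : r^n * a ≤ r^n * b := by nlinarith
    have hup := (int_ub hu h1 hAB (hint _ _ (mul_pos ht ha).le hAB)).1
    rw [key n h1]
    have hE : (0:ℝ) < (r^n*b)^(ρ-1) * l (r^n*b) :=
      mul_pos (rpow_pos_of_pos (mul_pos ht (by linarith)) _) h2
    have hD : (0:ℝ) < (r^n*b)^(ρ-1) * l (r^n*b) * r^n * (b-a) :=
      mul_pos (mul_pos hE ht) (by linarith)
    calc (∫ y in (r^n*a)..(r^n*b), u y) / ((r^n*b)^(ρ-1) * l (r^n*b) * r^n * (b-a))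
        ≤ (u (r^n*b) * (r^n*b - r^n*a)) / ((r^n*b)^(ρ-1) * l (r^n*b) * r^n * (b-a)) :=
          (div_le_div_iff_of_pos_right hD).2 hup
      _ = u (r^n*b) / ((r^n*b)^(ρ-1) * l (r^n*b)) := by
          rw [show (r:ℝ)^n*b - r^n*a = r^n * (b-a) by ring]
          rw [div_eq_div_iff hD.ne' hE.ne']
          ring
  · filter_upwards [hx₀ev, hl a ha] with n h1 h2
    have ht : (0:ℝ) < r^n := pow_pos hr0 n
    have hAB : r^n * a ≤ r^n * b := by nlinarith
    have hlo := (int_ub hu h1 hAB (hint _ _ (mul_pos ht ha).le hAB)).2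
    rw [key n h1]
    have hE : (0:ℝ) < (r^n*a)^(ρ-1) * l (r^n*a) :=
      mul_pos (rpow_pos_of_pos (mul_pos ht ha) _) h2
    have hD : (0:ℝ) < (r^n*a)^(ρ-1) * l (r^n*a) * r^n * (b-a) :=
      mul_pos (mul_pos hE ht) (by linarith)
    calc u (r^n*a) / ((r^n*a)^(ρ-1) * l (r^n*a))
        = (u (r^n*a) * (r^n*b - r^n*a)) / ((r^n*a)^(ρ-1) * l (r^n*a) * r^n * (b-a)) := by
          rw [show (r:ℝ)^n*b - r^n*a = r^n * (b-a) by ring]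
          rw [div_eq_div_iff hE.ne' hD.ne']
          ring
      _ ≤ (∫ y in (r^n*a)..(r^n*b), u y) / ((r^n*a)^(ρ-1) * l (r^n*a) * r^n * (b-a)) :=
          (div_le_div_iff_of_pos_right hD).2 hlo


lemma sandwich_aux_anti {u l : ℝ → ℝ} {x₀ r ρ a b : ℝ} (hr : 1 < r)
    (hu : AntitoneOn u (Ici x₀))
    (hint : ∀ A B : ℝ, 0 ≤ A → A ≤ B → IntervalIntegrable u volume A B)
    (hl : ∀ c : ℝ, 0 < c → ∀ᶠ n : ℕ in atTop, 0 < l (r^n * c))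
    (ha : 0 < a) (hab : a < b) :
    (∀ᶠ n : ℕ in atTop,
      u (r^n*b) / ((r^n*b)^(ρ-1) * l (r^n*b)) ≤
        ((∫ y in (0:ℝ)..(r^n*b), u y) - ∫ y in (0:ℝ)..(r^n*a), u y) /
          ((r^n*b)^(ρ-1) * l (r^n*b) * r^n * (b-a))) ∧
    (∀ᶠ n : ℕ in atTop,
      ((∫ y in (0:ℝ)..(r^n*b), u y) - ∫ y in (0:ℝ)..(r^n*a), u y) /
          ((r^n*a)^(ρ-1) * l (r^n*a) * r^n * (b-a)) ≤
        u (r^n*a) / ((r^n*a)^(ρ-1) * l (r^n*a))) := by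
  have hm : MonotoneOn (fun y => -(u y)) (Ici x₀) := fun s hs t ht hst =>
    neg_le_neg (hu hs ht hst)
  have hint' : ∀ A B : ℝ, 0 ≤ A → A ≤ B → IntervalIntegrable (fun y => -(u y)) volume A B :=
    fun A B h1 h2 => (hint A B h1 h2).neg
  obtain ⟨h1, h2⟩ := sandwich_aux (ρ := ρ) hr hm hint' hl ha hab
  constructor
  · filter_upwards [h1] with n hn
    rw [intervalIntegral.integral_neg, intervalIntegral.integral_neg] at hn
    have e1 : (-(∫ y in (0:ℝ)..(r^n*b), u y) - -(∫ y in (0:ℝ)..(r^n*a), u y)) /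
        ((r^n*b)^(ρ-1) * l (r^n*b) * r^n * (b-a)) =
        -(((∫ y in (0:ℝ)..(r^n*b), u y) - ∫ y in (0:ℝ)..(r^n*a), u y) /
          ((r^n*b)^(ρ-1) * l (r^n*b) * r^n * (b-a))) := by ring
    have e2 : -u (r^n*b) / ((r^n*b)^(ρ-1) * l (r^n*b)) =
        -(u (r^n*b) / ((r^n*b)^(ρ-1) * l (r^n*b))) := by ring
    rw [e1, e2] at hn
    linarith
  · filter_upwards [h2] with n hn
    rw [intervalIntegral.integral_neg, intervalIntegral.integral_neg] at hn
    have e1 : (-(∫ y in (0:ℝ)..(r^n*b), u y) - -(∫ y in (0:ℝ)..(r^n*a), u y)) /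
        ((r^n*a)^(ρ-1) * l (r^n*a) * r^n * (b-a)) =
        -(((∫ y in (0:ℝ)..(r^n*b), u y) - ∫ y in (0:ℝ)..(r^n*a), u y) /
          ((r^n*a)^(ρ-1) * l (r^n*a) * r^n * (b-a))) := by ring
    have e2 : -u (r^n*a) / ((r^n*a)^(ρ-1) * l (r^n*a)) =
        -(u (r^n*a) / ((r^n*a)^(ρ-1) * l (r^n*a))) := by ring
    rw [e1, e2] at hn
    linarith


lemma mono_integrableOn {g : ℝ → ℝ} (hg : MonotoneOn g (Ioi 0) ∨ AntitoneOn g (Ioi 0))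
    {C ρ X : ℝ} (hρ : 0 < ρ) (hX : 0 < X) (hbd : ∀ y : ℝ, 0 < y → |g y| ≤ C * y^(ρ-1)) :
    IntegrableOn g (Ioc 0 X) := by
  have hunion : Ioc (0:ℝ) X = ⋃ k : ℕ, Ioc (X/((k:ℝ)+1)) X := by
    ext y
    simp only [mem_Ioc, mem_iUnion]
    constructor
    · rintro ⟨hy0, hyX⟩
      obtain ⟨k, hk⟩ := exists_nat_gt (X/y)
      refine ⟨k, ⟨?_, hyX⟩⟩
      rw [div_lt_iff₀ (by positivity)]
      rw [div_lt_iff₀ hy0] at hk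
      nlinarith
    · rintro ⟨k, h1, h2⟩
      exact ⟨lt_trans (by positivity) h1, h2⟩
  have hmeas : ∀ k : ℕ, AEMeasurable g (volume.restrict (Ioc (X/((k:ℝ)+1)) X)) := by
    intro k
    set c : ℝ := X/((k:ℝ)+1) with hc
    have hc0 : 0 < c := by positivity
    have hext : Measurable (fun y => g (max y c)) := by
      rcases hg with h | h
      · have hm : Monotone fun y => g (max y c) := fun s t hst =>
          h (lt_of_lt_of_le hc0 (le_max_right s c))
            (lt_of_lt_of_le hc0 (le_max_right t c)) (max_le_max hst (le_refl c))
        exact hm.measurable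
      · have hm : Antitone fun y => g (max y c) := fun s t hst =>
          h (lt_of_lt_of_le hc0 (le_max_right s c))
            (lt_of_lt_of_le hc0 (le_max_right t c)) (max_le_max hst (le_refl c))
        exact hm.measurable
    refine hext.aemeasurable.congr ?_
    rw [Filter.EventuallyEq, ae_restrict_iff' measurableSet_Ioc]
    exact ae_of_all _ fun y hy => by rw [max_eq_left (le_of_lt hy.1)]
  have haemeas : AEMeasurable g (volume.restrict (Ioc 0 X)) := by
    rw [hunion]
    exact aemeasurable_iUnion_iff.2 hmeas
  have hdom : IntegrableOn (fun y : ℝ => C * y^(ρ-1)) (Ioc 0 X) := by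
    have h1 := intervalIntegral.intervalIntegrable_rpow' (show (-1:ℝ) < ρ-1 by linarith) (a := 0) (b := X)
    exact ((intervalIntegrable_iff_integrableOn_Ioc_of_le hX.le).1 h1).const_mul C
  apply hdom.mono' haemeas.aestronglyMeasurable
  rw [ae_restrict_iff' measurableSet_Ioc]
  exact ae_of_all _ fun y hy => by simpa [Real.norm_eq_abs] using hbd y hy.1

lemma ftc_aux {q g : ℝ → ℝ} {X : ℝ} (hX : 0 < X)
    (hcont : ∀ y : ℝ, 0 < y → ContinuousAt q y)
    (hq0 : Tendsto q (𝓝[>] 0) (𝓝 0))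
    (hderiv : ∀ y : ℝ, 0 < y → HasDerivWithinAt q (g y) (Ioi y) y)
    (hint : IntegrableOn g (Ioc 0 X)) :
    ∫ y in (0:ℝ)..X, g y = q X := by
  set Q : ℝ → ℝ := fun y => if 0 < y then q y else 0 with hQ
  have hQpos : ∀ y : ℝ, 0 < y → Q y = q y := fun y hy => if_pos hy
  have hc : ContinuousOn Q (Icc 0 X) := by
    intro y hy
    rcases eq_or_lt_of_le hy.1 with h0 | h0
    · subst h0
      have ht : Tendsto Q (𝓝[Ici (0:ℝ)] 0) (𝓝 0) := by
        rw [show Ici (0:ℝ) = insert 0 (Ioi 0) from Ioi_insert.symm, nhdsWithin_insert]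
        rw [tendsto_sup]
        constructor
        · have hz : Q 0 = 0 := if_neg (lt_irrefl 0)
          have hp := tendsto_pure_nhds Q 0
          rwa [hz] at hp
        · apply hq0.congr'
          filter_upwards [self_mem_nhdsWithin] with t ht
          exact (hQpos t ht).symm
      have : Q 0 = 0 := if_neg (lt_irrefl 0)
      rw [ContinuousWithinAt, this]
      exact ht.mono_left (nhdsWithin_mono _ (fun t htm => htm.1))
    · have hcq : ContinuousAt Q y := by
        apply (hcont y h0).congr
        filter_upwards [Ioi_mem_nhds h0] with t ht
        exact (hQpos t ht).symm
      exact hcq.continuousWithinAt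
  have hd : ∀ y ∈ Ioo (0:ℝ) X, HasDerivWithinAt Q (g y) (Ioi y) y := by
    intro y hy
    apply (hderiv y hy.1).congr_of_eventuallyEq ?_ (hQpos y hy.1)
    filter_upwards [self_mem_nhdsWithin] with t ht
    exact hQpos t (lt_trans hy.1 ht)
  have hiint : IntervalIntegrable g volume 0 X :=
    (intervalIntegrable_iff_integrableOn_Ioc_of_le hX.le).2 hint
  have h := intervalIntegral.integral_eq_sub_of_hasDeriv_right_of_le hX.le hc hd hiint
  have h0 : Q 0 = 0 := if_neg (lt_irrefl 0)
  rw [h, hQpos X hX, h0, sub_zero]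


lemma final_assembly {u p l q g : ℝ → ℝ} {r ρ M cP c₁ c₂ : ℝ}
    (hr : 1 < r) (hρ : 0 < ρ)
    (hppos : ∀ x : ℝ, 0 < x → 0 < p x) (hM : ∀ x : ℝ, 0 < x → p x ≤ M)
    (hcP0 : 0 < cP) (hcPb : ∀ x ∈ Icc (1:ℝ) r, cP ≤ p x)
    (hper : ∀ x : ℝ, 0 < x → p (x * r) = p x)
    (hq : ∀ x : ℝ, q x = x ^ ρ * p x)
    (hc₁ : 0 < c₁)
    (hgd : ∀ x : ℝ, 0 < x → HasDerivWithinAt q (g x) (Ioi x) x)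
    (hgrc : ∀ x : ℝ, 0 < x → ContinuousWithinAt g (Ici x) x)
    (hgsc : ∀ x : ℝ, 0 < x → r * g (r * x) = r ^ ρ * g x)
    (hgmono : MonotoneOn g (Ioi 0) ∨ AntitoneOn g (Ioi 0))
    (hgb : ∀ x : ℝ, 0 < x → c₁ * (q x / x) ≤ g x ∧ g x ≤ c₂ * (q x / x))
    (hqcont : ∀ x : ℝ, 0 < x → ContinuousAt q x)
    (hsand : ∀ z : ℝ, 0 < z → ContinuousAt g z →
      Tendsto (fun n : ℕ => u (r^n * z) / ((r^n * z) ^ (ρ - 1) * l (r^n * z)))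
        atTop (𝓝 (z ^ (1 - ρ) * g z))) :
    ∃ p₀ : ℝ → ℝ, MemP r p₀ ∧
      (∀ x > (0:ℝ), p x = x ^ (-ρ) * ∫ y in (0:ℝ)..x, y ^ (ρ - 1) * p₀ y) ∧
      ∀ z > (0:ℝ), ContinuousAt p₀ z →
        Tendsto (fun n : ℕ => u (r^n * z) / ((r^n * z) ^ (ρ - 1) * l (r^n * z)))
          Filter.atTop (𝓝 (p₀ z)) := by
  have hr0 : (0:ℝ) < r := by linarith
  have hqpos : ∀ x : ℝ, 0 < x → 0 < q x := by
    intro x hx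
    rw [hq x]
    exact mul_pos (rpow_pos_of_pos hx ρ) (hppos x hx)
  have hxid : ∀ x : ℝ, 0 < x → x^(1-ρ) * (q x / x) = p x := by
    intro x hx
    have h1 : x^(1-ρ) * x^ρ = x := by
      rw [← rpow_add hx]
      norm_num
    rw [hq x]
    calc x^(1-ρ) * (x^ρ * p x / x) = (x^(1-ρ) * x^ρ) * p x / x := by ring
      _ = x * p x / x := by rw [h1]
      _ = p x := by field_simp
  have hgpos : ∀ x : ℝ, 0 < x → 0 < g x := fun x hx =>
    lt_of_lt_of_le (mul_pos hc₁ (div_pos (hqpos x hx) hx)) (hgb x hx).1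
  have hc₂ : 0 < c₂ := by
    have h1 := (hgb 1 one_pos).2
    have h2 := hgpos 1 one_pos
    have h3 : 0 < q 1 / 1 := by
      rw [hq 1]; norm_num
      exact hppos 1 one_pos
    nlinarith
  have hMpos : 0 < M := lt_of_lt_of_le (hppos 1 one_pos) (hM 1 one_pos)
  set p₀ : ℝ → ℝ := fun y => if 0 < y then y^(1-ρ) * g y else 1 with hp₀
  have hp₀eq : ∀ y : ℝ, 0 < y → p₀ y = y^(1-ρ) * g y := fun y hy => if_pos hy
  have hp₀le : ∀ x : ℝ, 0 < x → p₀ x ≤ c₂ * p x := by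
    intro x hx
    rw [hp₀eq x hx, ← hxid x hx]
    have h1 := (hgb x hx).2
    have h2 : (0:ℝ) < x^(1-ρ) := rpow_pos_of_pos hx _
    calc x^(1-ρ) * g x ≤ x^(1-ρ) * (c₂ * (q x / x)) := by nlinarith
      _ = c₂ * (x^(1-ρ) * (q x / x)) := by ring
  have hp₀ge : ∀ x : ℝ, 0 < x → c₁ * p x ≤ p₀ x := by
    intro x hx
    rw [hp₀eq x hx, ← hxid x hx]
    have h1 := (hgb x hx).1
    have h2 : (0:ℝ) < x^(1-ρ) := rpow_pos_of_pos hx _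
    calc c₁ * (x^(1-ρ) * (q x / x)) = x^(1-ρ) * (c₁ * (q x / x)) := by ring
      _ ≤ x^(1-ρ) * g x := by nlinarith
  have hmemP : MemP r p₀ := by
    refine ⟨?_, ⟨c₂ * M, ?_⟩, ?_, ⟨c₁ * cP, by positivity, ?_⟩, ?_⟩
    · intro x hx
      rw [hp₀eq x hx]
      exact mul_pos (rpow_pos_of_pos hx _) (hgpos x hx)
    · intro x hx
      calc p₀ x ≤ c₂ * p x := hp₀le x hx
        _ ≤ c₂ * M := by nlinarith [hM x hx]
    · intro x hx
      have hF : ContinuousWithinAt (fun y => y^(1-ρ) * g y) (Ici x) x :=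
        ((Real.continuousAt_rpow_const x (1-ρ) (Or.inl hx.ne')).continuousWithinAt).mul (hgrc x hx)
      apply hF.congr
      · intro y hy
        exact hp₀eq y (lt_of_lt_of_le hx hy)
      · exact hp₀eq x hx
    · intro x hx
      calc c₁ * cP ≤ c₁ * p x := by nlinarith [hcPb x hx]
        _ ≤ p₀ x := hp₀ge x (lt_of_lt_of_le one_pos hx.1)
    · intro x hx
      have hxr : 0 < x * r := by positivity
      rw [hp₀eq _ hxr, hp₀eq x hx]
      have h1 : g (x * r) = r^(ρ-1) * g x := by
        have h2 := hgsc x hx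
        have h3 : r^(ρ-1) = r^ρ / r := by
          rw [rpow_sub hr0, rpow_one]
        rw [h3, mul_comm x r]
        field_simp
        linarith
      rw [h1]
      have h4 : (x * r)^(1-ρ) = x^(1-ρ) * r^(1-ρ) := mul_rpow hx.le hr0.le
      rw [h4]
      have h5 : r^(1-ρ) * r^(ρ-1) = 1 := by
        rw [← rpow_add hr0]
        norm_num
      calc x^(1-ρ) * r^(1-ρ) * (r^(ρ-1) * g x) = (r^(1-ρ) * r^(ρ-1)) * (x^(1-ρ) * g x) := by ring
        _ = x^(1-ρ) * g x := by rw [h5]; ring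
  -- FTC part
  have hq0 : Tendsto q (𝓝[>] (0:ℝ)) (𝓝 0) := by
    have hub : Tendsto (fun y : ℝ => M * y^ρ) (𝓝[>] (0:ℝ)) (𝓝 0) := by
      have h1 : ContinuousAt (fun y : ℝ => y^ρ) 0 :=
        Real.continuousAt_rpow_const 0 ρ (Or.inr hρ.le)
      have h2 : Tendsto (fun y : ℝ => y^ρ) (𝓝[>] (0:ℝ)) (𝓝 ((0:ℝ)^ρ)) :=
        h1.continuousWithinAt.tendsto
      rw [zero_rpow hρ.ne'] at h2
      have := h2.const_mul M
      rwa [mul_zero] at this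
    refine tendsto_of_tendsto_of_tendsto_of_le_of_le' tendsto_const_nhds hub ?_ ?_
    · filter_upwards [self_mem_nhdsWithin] with y hy
      exact (hqpos y hy).le
    · filter_upwards [self_mem_nhdsWithin] with y hy
      rw [hq y]
      have : p y ≤ M := hM y hy
      nlinarith [rpow_pos_of_pos (show (0:ℝ) < y from hy) ρ]
  have hgbd : ∀ y : ℝ, 0 < y → |g y| ≤ (c₂ * M) * y^(ρ-1) := by
    intro y hy
    rw [abs_of_pos (hgpos y hy)]
    have h1 := (hgb y hy).2
    have h2 : q y / y ≤ M * y^(ρ-1) := by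
      rw [hq y]
      have h3 : y^ρ / y = y^(ρ-1) := by
        rw [rpow_sub hy, rpow_one]
      calc y^ρ * p y / y = (y^ρ / y) * p y := by ring
        _ = y^(ρ-1) * p y := by rw [h3]
        _ ≤ y^(ρ-1) * M := by nlinarith [hM y hy, rpow_pos_of_pos hy (ρ-1)]
        _ = M * y^(ρ-1) := by ring
    calc g y ≤ c₂ * (q y / y) := h1
      _ ≤ c₂ * (M * y^(ρ-1)) := by nlinarith
      _ = (c₂ * M) * y^(ρ-1) := by ring
  have hFTC : ∀ x : ℝ, 0 < x → ∫ y in (0:ℝ)..x, g y = q x := fun x hx =>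
    ftc_aux hx hqcont hq0 hgd (mono_integrableOn hgmono hρ hx hgbd)
  refine ⟨p₀, hmemP, ?_, ?_⟩
  · intro x hx
    have hcongr : ∫ y in (0:ℝ)..x, y^(ρ-1) * p₀ y = ∫ y in (0:ℝ)..x, g y := by
      rw [intervalIntegral.integral_of_le hx.le, intervalIntegral.integral_of_le hx.le]
      apply setIntegral_congr_fun measurableSet_Ioc
      intro y hy
      have hy0 : 0 < y := hy.1
      show y^(ρ-1) * p₀ y = g y
      rw [hp₀eq y hy0]
      have h1 : y^(ρ-1) * y^(1-ρ) = 1 := by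
        rw [← rpow_add hy0]
        norm_num
      calc y^(ρ-1) * (y^(1-ρ) * g y) = (y^(ρ-1) * y^(1-ρ)) * g y := by ring
        _ = g y := by rw [h1]; ring
    rw [hcongr, hFTC x hx, hq x]
    have h2 : x^(-ρ) * x^ρ = 1 := by
      rw [← rpow_add hx]
      norm_num
    calc p x = (x^(-ρ) * x^ρ) * p x := by rw [h2]; ring
      _ = x^(-ρ) * (x^ρ * p x) := by ring
  · intro z hz hc
    have hgc : ContinuousAt g z := by
      have hF : ContinuousAt (fun y => y^(ρ-1) * p₀ y) z :=
        (Real.continuousAt_rpow_const z (ρ-1) (Or.inl hz.ne')).mul hc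
      apply hF.congr
      filter_upwards [Ioi_mem_nhds hz] with y hy
      rw [hp₀eq y hy]
      have h1 : y^(ρ-1) * y^(1-ρ) = 1 := by
        rw [← rpow_add hy]
        norm_num
      calc y^(ρ-1) * (y^(1-ρ) * g y) = (y^(ρ-1) * y^(1-ρ)) * g y := by ring
        _ = g y := by rw [h1]; ring
    have := hsand z hz hgc
    rwa [show z^(1-ρ) * g z = p₀ z by rw [hp₀eq z hz]] at this


set_option maxHeartbeats 1600000

/-- Monotone density theorem for regularly log-periodic functions. -/
theorem statement_16 (u p : ℝ → ℝ) (r ρ : ℝ) (l : ℝ → ℝ)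
    (hr : 1 < r) (hρ : 0 < ρ) (hl : SlowlyVarying l)
    (hum : Measurable u)
    (huint : ∀ x : ℝ, MeasureTheory.IntegrableOn u (Set.Icc 0 x))
    (humon : UltimatelyMonotone u)
    (hp : MemP r p)
    (hlim : ∀ z > (0:ℝ), ContinuousAt p z →
      Filter.Tendsto
        (fun n : ℕ =>
          (∫ y in (0:ℝ)..(r^n * z), u y) / ((r^n * z) ^ ρ * l (r^n * z)))
        Filter.atTop (nhds (p z))) :
    ∃ p₀ : ℝ → ℝ, MemP r p₀ ∧
      (∀ x > (0:ℝ), p x = x ^ (-ρ) * ∫ y in (0:ℝ)..x, y ^ (ρ - 1) * p₀ y) ∧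
      ∀ z > (0:ℝ), ContinuousAt p₀ z →
        Filter.Tendsto
          (fun n : ℕ => u (r^n * z) / ((r^n * z) ^ (ρ - 1) * l (r^n * z)))
          Filter.atTop (nhds (p₀ z)) := by
  obtain ⟨x₀, humon'⟩ := humon
  obtain ⟨hppos, ⟨M, hM⟩, hprc, ⟨cP, hcP0, hcPb⟩, hper⟩ := hp
  have hr0 : (0:ℝ) < r := by linarith
  have hrn : Tendsto (fun n : ℕ => (r:ℝ)^n) atTop atTop :=
    tendsto_pow_atTop_atTop_of_one_lt hr
  set q : ℝ → ℝ := fun x => x ^ ρ * p x with hqdef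
  have hq : ∀ x : ℝ, q x = x ^ ρ * p x := fun x => rfl
  have hqrc : ∀ x : ℝ, 0 < x → ContinuousWithinAt q (Ici x) x := fun x hx =>
    ((Real.continuousAt_rpow_const x ρ (Or.inl hx.ne')).continuousWithinAt).mul (hprc x hx)
  have hqsc : ∀ x : ℝ, 0 < x → q (r * x) = r ^ ρ * q x := by
    intro x hx
    rw [hq, hq, mul_comm r x, hper x hx, mul_rpow hx.le hr0.le]
    ring
  have hlpos : ∀ c : ℝ, 0 < c → ∀ᶠ n : ℕ in atTop, 0 < l (r^n * c) :=
    fun c hc => (hrn.atTop_mul_const hc).eventually hl.1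
  have hintu : ∀ A B : ℝ, 0 ≤ A → A ≤ B → IntervalIntegrable u volume A B := by
    intro A B hA hAB
    rw [intervalIntegrable_iff_integrableOn_Ioc_of_le hAB]
    exact (huint B).mono_set (fun y hy => ⟨le_trans hA hy.1.le, hy.2⟩)
  have hdense : ∀ α β : ℝ, 0 < α → α < β → ∃ t ∈ Ioo α β, ContinuousAt p t := by
    intro α β hα hαβ
    set f : ℝ → ℝ := fun t => p (max t (α/2)) with hfdef
    have hfrc : ∀ x : ℝ, ContinuousWithinAt f (Ici x) x := by
      intro x
      have h1 : ContinuousWithinAt p (Ici (max x (α/2))) (max x (α/2)) :=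
        hprc _ (lt_of_lt_of_le (by linarith) (le_max_right _ _))
      have h2 : ContinuousWithinAt (fun t : ℝ => max t (α/2)) (Ici x) x :=
        ((continuous_id.max continuous_const).continuousAt).continuousWithinAt
      exact ContinuousWithinAt.comp (g := p) (f := fun t : ℝ => max t (α/2)) (s := Ici x)
        (t := Ici (max x (α/2))) h1 h2 (fun t ht => mem_Ici.2 (max_le_max ht (le_refl _)))
    obtain ⟨z, hz, hzc⟩ := rc_dense_cont hfrc hαβ
    refine ⟨z, hz, ?_⟩
    apply hzc.congr
    filter_upwards [Ioi_mem_nhds (show α/2 < z by linarith [hz.1])] with t ht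
    show p (max t (α/2)) = p t
    rw [max_eq_left (le_of_lt ht)]
  have hAconv : ∀ z : ℝ, 0 < z → ∀ a : ℝ, 0 < a → ContinuousAt p a →
      Tendsto (fun n : ℕ => (∫ y in (0:ℝ)..(r^n*a), u y) / ((r^n*z)^(ρ-1) * l (r^n*z) * r^n))
        atTop (𝓝 (p a * (a^ρ * z^(1-ρ)))) :=
    fun z hz a ha hca => aux_ratio hr hl ha hz (hlim a ha hca)
  have hdiff : ∀ z : ℝ, 0 < z → ∀ a b : ℝ, 0 < a → a < b → ContinuousAt p a → ContinuousAt p b →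
      Tendsto (fun n : ℕ => ((∫ y in (0:ℝ)..(r^n*b), u y) - ∫ y in (0:ℝ)..(r^n*a), u y) /
          ((r^n*z)^(ρ-1) * l (r^n*z) * r^n * (b-a))) atTop (𝓝 (z^(1-ρ) * slope q a b)) := by
    intro z hz a b ha hab hca hcb
    have h := ((hAconv z hz b (by linarith) hcb).sub (hAconv z hz a ha hca)).div_const (b - a)
    have hval : (p b * (b^ρ * z^(1-ρ)) - p a * (a^ρ * z^(1-ρ))) / (b - a) = z^(1-ρ) * slope q a b := by
      rw [slope_def_field, hq, hq]
      ring
    rw [hval] at h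
    apply h.congr
    intro n
    rw [div_sub_div_same, div_div]
  have hpc_of_qc : (∀ x : ℝ, 0 < x → ContinuousAt q x) → ∀ x : ℝ, 0 < x → ContinuousAt p x := by
    intro hqc x hx
    have h1 : ContinuousAt (fun y => q y / y^ρ) x :=
      (hqc x hx).div (Real.continuousAt_rpow_const x ρ (Or.inl hx.ne'))
        (rpow_pos_of_pos hx ρ).ne'
    apply h1.congr
    filter_upwards [Ioi_mem_nhds hx] with y hy
    have hy0 : 0 < y := hy
    rw [hq y, mul_comm, mul_div_assoc, div_self (rpow_pos_of_pos hy0 ρ).ne', mul_one]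
  -- slope constants
  set κ₁ : ℝ := (1 - (r^ρ)⁻¹)/(1 - r⁻¹) with hκ₁def
  set κ₂ : ℝ := (r^ρ - 1)/(r - 1) with hκ₂def
  have hrρ : 1 < r^ρ := (Real.one_lt_rpow_iff_of_pos hr0).2 (Or.inl ⟨hr, hρ⟩)
  have hκ₁pos : 0 < κ₁ := by
    apply div_pos
    · rw [sub_pos]
      exact inv_lt_one_of_one_lt₀ hrρ
    · rw [sub_pos]
      exact inv_lt_one_of_one_lt₀ hr
  have hκ₂pos : 0 < κ₂ := by
    apply div_pos <;> linarith
  have hminpos : 0 < min κ₁ κ₂ := lt_min hκ₁pos hκ₂pos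
  have hslope_lo : ∀ x : ℝ, 0 < x → slope q (x/r) x = κ₁ * (q x / x) := by
    intro x hx
    have hxr : q (x/r) = q x / r^ρ := by
      have h1 := hqsc (x/r) (by positivity)
      rw [mul_div_cancel₀ x hr0.ne'] at h1
      rw [h1]
      field_simp
    rw [slope_def_field, hxr, hκ₁def]
    have hne1 : x - x/r ≠ 0 := by
      have : x/r < x := div_lt_self hx hr
      intro hE; linarith
    have hne2 : (1:ℝ) - r⁻¹ ≠ 0 := by
      have : r⁻¹ < 1 := inv_lt_one_of_one_lt₀ hr
      intro hE; linarith
    field_simp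
  have hslope_hi : ∀ x : ℝ, 0 < x → slope q x (r*x) = κ₂ * (q x / x) := by
    intro x hx
    rw [slope_def_field, hqsc x hx, hκ₂def]
    have hne1 : r*x - x ≠ 0 := by
      have : x < r*x := by nlinarith
      intro hE; linarith
    have hne2 : r - 1 ≠ 0 := by intro hE; linarith
    field_simp
  have hqxpos : ∀ x : ℝ, 0 < x → 0 < q x / x := fun x hx =>
    div_pos (mul_pos (rpow_pos_of_pos hx ρ) (hppos x hx)) hx
  rcases humon' with hmono | hanti
  · -- u ultimately monotone nondecreasing : q convex
    have hcp : ∀ a b c : ℝ, a ∈ {t : ℝ | ContinuousAt p t} → b ∈ {t : ℝ | ContinuousAt p t} →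
        c ∈ {t : ℝ | ContinuousAt p t} → 0 < a → a < b → b < c → slope q a b ≤ slope q b c := by
      intro a b c hca hcb hcc ha hab hbc
      have hb0 : (0:ℝ) < b := by linarith
      have hS := hdiff b hb0 a b ha hab hca hcb
      have hT := hdiff b hb0 b c hb0 hbc hcb hcc
      have hs1 := (sandwich_aux (l := l) (ρ := ρ) hr hmono hintu hlpos ha hab).1
      have hs2 := (sandwich_aux (l := l) (ρ := ρ) hr hmono hintu hlpos hb0 hbc).2
      have hev : (fun n : ℕ => ((∫ y in (0:ℝ)..(r^n*b), u y) - ∫ y in (0:ℝ)..(r^n*a), u y) /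
            ((r^n*b)^(ρ-1) * l (r^n*b) * r^n * (b-a))) ≤ᶠ[atTop]
          (fun n : ℕ => ((∫ y in (0:ℝ)..(r^n*c), u y) - ∫ y in (0:ℝ)..(r^n*b), u y) /
            ((r^n*b)^(ρ-1) * l (r^n*b) * r^n * (c-b))) := by
        filter_upwards [hs1, hs2] with n h1 h2
        exact le_trans h1 h2
      have hle := le_of_tendsto_of_tendsto hS hT hev
      have hb1 : (0:ℝ) < b^(1-ρ) := rpow_pos_of_pos hb0 _
      exact (mul_le_mul_iff_right₀ hb1).1 hle
    have hsm : SlopeM q := slope_ext (D := {t : ℝ | ContinuousAt p t})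
      (fun x hx => hqrc x hx) hdense hcp
    have hqcont : ∀ x : ℝ, 0 < x → ContinuousAt q x := fun x hx => G_contAt hsm hx
    have hpc : ∀ x : ℝ, 0 < x → ContinuousAt p x := hpc_of_qc hqcont
    have hgb : ∀ x : ℝ, 0 < x →
        min κ₁ κ₂ * (q x / x) ≤ rd q x ∧ rd q x ≤ max κ₁ κ₂ * (q x / x) := by
      intro x hx
      have h1 : slope q (x/r) x ≤ rd q x := le_rd hsm (by positivity) (div_lt_self hx hr)
      have h2 : rd q x ≤ slope q x (r*x) := rd_le hsm hx (by nlinarith)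
      rw [hslope_lo x hx] at h1
      rw [hslope_hi x hx] at h2
      have ht := (hqxpos x hx).le
      constructor
      · calc min κ₁ κ₂ * (q x / x) ≤ κ₁ * (q x / x) :=
              mul_le_mul_of_nonneg_right (min_le_left _ _) ht
          _ ≤ rd q x := h1
      · calc rd q x ≤ κ₂ * (q x / x) := h2
          _ ≤ max κ₁ κ₂ * (q x / x) := mul_le_mul_of_nonneg_right (le_max_right _ _) ht
    have hsand : ∀ z : ℝ, 0 < z → ContinuousAt (rd q) z →
        Tendsto (fun n : ℕ => u (r^n * z) / ((r^n * z) ^ (ρ - 1) * l (r^n * z)))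
          atTop (𝓝 (z ^ (1 - ρ) * rd q z)) := by
      intro z hz hgz
      rw [Metric.tendsto_nhds]
      intro ε hε
      have hw0 : 0 < z^(1-ρ) := rpow_pos_of_pos hz _
      have hε'0 : 0 < ε/(2*z^(1-ρ)) := by positivity
      have hwε : z^(1-ρ) * (ε/(2*z^(1-ρ))) = ε/2 := by field_simp
      obtain ⟨δ₁, hδ₁0, hδ₁⟩ := Metric.continuousAt_iff.1 hgz _ hε'0
      have haz : max (z - δ₁/2) (z/2) < z := max_lt (by linarith) (by linarith)
      have ha0 : 0 < max (z - δ₁/2) (z/2) := lt_of_lt_of_le (by linarith) (le_max_right _ _)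
      have hga := hδ₁ (show dist (max (z - δ₁/2) (z/2)) z < δ₁ by
        rw [Real.dist_eq, abs_lt]
        refine ⟨?_, by linarith⟩
        have h5 : z - δ₁/2 ≤ max (z - δ₁/2) (z/2) := le_max_left _ _
        linarith)
      rw [Real.dist_eq] at hga
      have hslo : rd q (max (z - δ₁/2) (z/2)) ≤ slope q (max (z - δ₁/2) (z/2)) z :=
        rd_le hsm ha0 haz
      obtain ⟨s, ⟨b, hbmem, rfl⟩, hsb⟩ := (csInf_lt_iff (rd_bddBelow hsm hz)
        ⟨slope q z (z+1), ⟨z+1, mem_Ioi.2 (by linarith), rfl⟩⟩).1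
        (show rd q z < rd q z + ε/(2*z^(1-ρ)) by linarith)
      rw [mem_Ioi] at hbmem
      have hSa := hdiff z hz _ z ha0 haz (hpc _ ha0) (hpc z hz)
      have hSb := hdiff z hz z b hz hbmem (hpc z hz) (hpc b (by linarith))
      have hlow := (sandwich_aux (l := l) (ρ := ρ) hr hmono hintu hlpos ha0 haz).1
      have hhigh := (sandwich_aux (l := l) (ρ := ρ) hr hmono hintu hlpos hz hbmem).2
      have hLlb : z^(1-ρ) * rd q z - ε/2 < z^(1-ρ) * slope q (max (z - δ₁/2) (z/2)) z := by
        have h1 : rd q z - ε/(2*z^(1-ρ)) < rd q (max (z - δ₁/2) (z/2)) := by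
          have := (abs_lt.1 hga).1
          linarith
        have h2 : rd q z - ε/(2*z^(1-ρ)) < slope q (max (z - δ₁/2) (z/2)) z := lt_of_lt_of_le h1 hslo
        have h3 := mul_lt_mul_of_pos_left h2 hw0
        rw [mul_sub] at h3
        linarith [hwε]
      have hRub : z^(1-ρ) * slope q z b < z^(1-ρ) * rd q z + ε/2 := by
        have h3 := mul_lt_mul_of_pos_left hsb hw0
        rw [mul_add] at h3
        linarith [hwε]
      have hev1 := hSa.eventually (eventually_gt_nhds hLlb)
      have hev2 := hSb.eventually (eventually_lt_nhds hRub)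
      filter_upwards [hev1, hev2, hlow, hhigh] with n h1 h2 h3 h4
      rw [Real.dist_eq, abs_lt]
      constructor
      · linarith
      · linarith
    exact final_assembly (cP := cP) hr hρ hppos hM hcP0 hcPb hper hq hminpos
      (fun x hx => rd_hasDeriv hsm hx) (fun x hx => rd_rightCont hsm hx)
      (fun x hx => rd_scale hsm hr0 hqsc hx)
      (Or.inl (fun x hx y hy hxy => by
        rcases eq_or_lt_of_le hxy with rfl | h
        · exact le_refl _
        · exact rd_mono hsm hx h))
      hgb hqcont hsand
  · -- u ultimately antitone : q concave
    have hcp' : ∀ a b c : ℝ, a ∈ {t : ℝ | ContinuousAt p t} → b ∈ {t : ℝ | ContinuousAt p t} →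
        c ∈ {t : ℝ | ContinuousAt p t} → 0 < a → a < b → b < c →
        slope (fun y => -(q y)) a b ≤ slope (fun y => -(q y)) b c := by
      intro a b c hca hcb hcc ha hab hbc
      have hb0 : (0:ℝ) < b := by linarith
      have hS := hdiff b hb0 a b ha hab hca hcb
      have hT := hdiff b hb0 b c hb0 hbc hcb hcc
      have hs1 := (sandwich_aux_anti (l := l) (ρ := ρ) hr hanti hintu hlpos ha hab).1
      have hs2 := (sandwich_aux_anti (l := l) (ρ := ρ) hr hanti hintu hlpos hb0 hbc).2
      have hev : (fun n : ℕ => ((∫ y in (0:ℝ)..(r^n*c), u y) - ∫ y in (0:ℝ)..(r^n*b), u y) /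
            ((r^n*b)^(ρ-1) * l (r^n*b) * r^n * (c-b))) ≤ᶠ[atTop]
          (fun n : ℕ => ((∫ y in (0:ℝ)..(r^n*b), u y) - ∫ y in (0:ℝ)..(r^n*a), u y) /
            ((r^n*b)^(ρ-1) * l (r^n*b) * r^n * (b-a))) := by
        filter_upwards [hs1, hs2] with n h1 h2
        exact le_trans h2 h1
      have hle := le_of_tendsto_of_tendsto hT hS hev
      have hb1 : (0:ℝ) < b^(1-ρ) := rpow_pos_of_pos hb0 _
      have hq' := (mul_le_mul_iff_right₀ hb1).1 hle
      rw [slope_neg' q a b, slope_neg' q b c]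
      linarith
    have hsmM : SlopeM (fun y => -(q y)) := slope_ext (D := {t : ℝ | ContinuousAt p t})
      (fun x hx => (hqrc x hx).neg) hdense hcp'
    have hqcont : ∀ x : ℝ, 0 < x → ContinuousAt q x := by
      intro x hx
      have h1 : ContinuousAt (fun y => -(-(q y))) x := (G_contAt hsmM hx).neg
      have h2 : (fun y : ℝ => -(-(q y))) = q := funext fun y => neg_neg (q y)
      rwa [h2] at h1
    have hpc : ∀ x : ℝ, 0 < x → ContinuousAt p x := hpc_of_qc hqcont
    have hgd : ∀ x : ℝ, 0 < x →
        HasDerivWithinAt q (-(rd (fun y => -(q y)) x)) (Ioi x) x := by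
      intro x hx
      have h1 : HasDerivWithinAt (fun y => -(-(q y))) (-(rd (fun y => -(q y)) x)) (Ioi x) x :=
        (rd_hasDeriv hsmM hx).neg
      have h2 : (fun y : ℝ => -(-(q y))) = q := funext fun y => neg_neg (q y)
      rwa [h2] at h1
    have hGmsc : ∀ x : ℝ, 0 < x →
        (fun y => -(q y)) (r*x) = r^ρ * (fun y => -(q y)) x := by
      intro x hx
      show -(q (r*x)) = r^ρ * -(q x)
      rw [hqsc x hx]
      ring
    have hgb : ∀ x : ℝ, 0 < x →
        min κ₁ κ₂ * (q x / x) ≤ -(rd (fun y => -(q y)) x) ∧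
          -(rd (fun y => -(q y)) x) ≤ max κ₁ κ₂ * (q x / x) := by
      intro x hx
      have h1 : slope (fun y => -(q y)) (x/r) x ≤ rd (fun y => -(q y)) x :=
        le_rd hsmM (by positivity) (div_lt_self hx hr)
      have h2 : rd (fun y => -(q y)) x ≤ slope (fun y => -(q y)) x (r*x) :=
        rd_le hsmM hx (by nlinarith)
      rw [slope_neg' q (x/r) x, hslope_lo x hx] at h1
      rw [slope_neg' q x (r*x), hslope_hi x hx] at h2
      have ht := (hqxpos x hx).le
      constructor
      · have h3 : min κ₁ κ₂ * (q x / x) ≤ κ₂ * (q x / x) :=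
          mul_le_mul_of_nonneg_right (min_le_right _ _) ht
        linarith
      · have h3 : κ₁ * (q x / x) ≤ max κ₁ κ₂ * (q x / x) :=
          mul_le_mul_of_nonneg_right (le_max_left _ _) ht
        linarith
    have hsand : ∀ z : ℝ, 0 < z → ContinuousAt (fun t => -(rd (fun y => -(q y)) t)) z →
        Tendsto (fun n : ℕ => u (r^n * z) / ((r^n * z) ^ (ρ - 1) * l (r^n * z)))
          atTop (𝓝 (z ^ (1 - ρ) * -(rd (fun y => -(q y)) z))) := by
      intro z hz hgz
      rw [Metric.tendsto_nhds]
      intro ε hε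
      have hw0 : 0 < z^(1-ρ) := rpow_pos_of_pos hz _
      have hε'0 : 0 < ε/(2*z^(1-ρ)) := by positivity
      have hwε : z^(1-ρ) * (ε/(2*z^(1-ρ))) = ε/2 := by field_simp
      obtain ⟨δ₁, hδ₁0, hδ₁⟩ := Metric.continuousAt_iff.1 hgz _ hε'0
      have haz : max (z - δ₁/2) (z/2) < z := max_lt (by linarith) (by linarith)
      have ha0 : 0 < max (z - δ₁/2) (z/2) := lt_of_lt_of_le (by linarith) (le_max_right _ _)
      have hga := hδ₁ (show dist (max (z - δ₁/2) (z/2)) z < δ₁ by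
        rw [Real.dist_eq, abs_lt]
        refine ⟨?_, by linarith⟩
        have h5 : z - δ₁/2 ≤ max (z - δ₁/2) (z/2) := le_max_left _ _
        linarith)
      rw [Real.dist_eq] at hga
      have hgaβ : |(-(rd (fun y => -(q y)) (max (z - δ₁/2) (z/2)))) -
          (-(rd (fun y => -(q y)) z))| < ε/(2*z^(1-ρ)) := hga
      have hsloA : slope q (max (z - δ₁/2) (z/2)) z ≤ -(rd (fun y => -(q y)) (max (z - δ₁/2) (z/2))) := by
        have := rd_le hsmM ha0 haz
        rw [show slope (fun y => -(q y)) (max (z - δ₁/2) (z/2)) z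
            = -(slope q (max (z - δ₁/2) (z/2)) z) from slope_neg' q _ _] at this
        linarith [le_rd hsmM ha0 haz]
      obtain ⟨s, ⟨b, hbmem, rfl⟩, hsb⟩ := (csInf_lt_iff (rd_bddBelow hsmM hz)
        ⟨slope (fun y => -(q y)) z (z+1), ⟨z+1, mem_Ioi.2 (by linarith), rfl⟩⟩).1
        (show rd (fun y => -(q y)) z < rd (fun y => -(q y)) z + ε/(2*z^(1-ρ)) by linarith)
      rw [mem_Ioi] at hbmem
      have hsb' : -(rd (fun y => -(q y)) z) - ε/(2*z^(1-ρ)) < slope q z b := by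
        have hsb2 : slope (fun y => -(q y)) z b
            < rd (fun y => -(q y)) z + ε/(2*z^(1-ρ)) := hsb
        rw [show slope (fun y => -(q y)) z b = -(slope q z b) from slope_neg' q _ _] at hsb2
        linarith
      have hSa := hdiff z hz _ z ha0 haz (hpc _ ha0) (hpc z hz)
      have hSb := hdiff z hz z b hz hbmem (hpc z hz) (hpc b (by linarith))
      have hlow := (sandwich_aux_anti (l := l) (ρ := ρ) hr hanti hintu hlpos hz hbmem).2
      have hhigh := (sandwich_aux_anti (l := l) (ρ := ρ) hr hanti hintu hlpos ha0 haz).1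
      have hLlb : z^(1-ρ) * -(rd (fun y => -(q y)) z) - ε/2 < z^(1-ρ) * slope q z b := by
        have h3 := mul_lt_mul_of_pos_left hsb' hw0
        rw [mul_sub] at h3
        linarith [hwε]
      have hRub : z^(1-ρ) * slope q (max (z - δ₁/2) (z/2)) z
          < z^(1-ρ) * -(rd (fun y => -(q y)) z) + ε/2 := by
        have hga2 : -(rd (fun y => -(q y)) (max (z - δ₁/2) (z/2)))
            < -(rd (fun y => -(q y)) z) + ε/(2*z^(1-ρ)) := by
          have := (abs_lt.1 hgaβ).2
          linarith
        have h2 : slope q (max (z - δ₁/2) (z/2)) z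
            < -(rd (fun y => -(q y)) z) + ε/(2*z^(1-ρ)) := lt_of_le_of_lt hsloA hga2
        have h3 := mul_lt_mul_of_pos_left h2 hw0
        rw [mul_add] at h3
        linarith [hwε]
      have hev1 := hSb.eventually (eventually_gt_nhds hLlb)
      have hev2 := hSa.eventually (eventually_lt_nhds hRub)
      filter_upwards [hev1, hev2, hlow, hhigh] with n h1 h2 h3 h4
      rw [Real.dist_eq, abs_lt]
      constructor
      · linarith
      · linarith
    refine final_assembly (cP := cP) hr hρ hppos hM hcP0 hcPb hper hq hminpos hgd
      (fun x hx => (rd_rightCont hsmM hx).neg) ?_ (Or.inr ?_) hgb hqcont hsand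
    · intro x hx
      have := rd_scale hsmM hr0 hGmsc hx
      show r * -(rd (fun y => -(q y)) (r*x)) = r^ρ * -(rd (fun y => -(q y)) x)
      linarith
    · intro x hx y hy hxy
      rcases eq_or_lt_of_le hxy with rfl | h
      · exact le_refl _
      · show -(rd (fun y => -(q y)) y) ≤ -(rd (fun y => -(q y)) x)
        exact neg_le_neg (rd_mono hsmM hx h)
end

section
/- Let X have the generalized St. Petersburg distribution with parameter α = 1: P{X = 2^n} = 2^{−n}, n ≥ 1, with Laplace transform F̂(s) = Σ_{n≥1} e^{−2^n s} 2^{−n}. Then 1 − F̂(s) ∼ s log₂(1/s) as s ↓ 0. -/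
open Filter Real

set_option maxHeartbeats 1000000

private lemma exp_ub' (x : ℝ) : 1 - Real.exp (-x) ≤ x := by
  have := Real.add_one_le_exp (-x); linarith

private lemma exp_lb' {x : ℝ} (hx : 0 ≤ x) : x - x^2 ≤ 1 - Real.exp (-x) := by
  have h1 := Real.add_one_le_exp x
  have h2 := Real.add_one_le_exp (-x)
  have h3 : Real.exp (-x) * Real.exp x = 1 := by
    rw [← Real.exp_add]; simp
  nlinarith [Real.exp_pos (-x)]

private lemma exp_nn' {x : ℝ} (hx : 0 ≤ x) : 0 ≤ 1 - Real.exp (-x) := by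
  have : Real.exp (-x) ≤ Real.exp 0 := Real.exp_le_exp.mpr (by linarith)
  simpa using this

private lemma e_eq (n : ℕ) : (2:ℝ)^(-((n:ℝ)+1)) = (1/2:ℝ)^(n+1) := by
  have h : -((n:ℝ)+1) = -(((n+1 : ℕ)) : ℝ) := by push_cast; ring
  rw [h, Real.rpow_neg (by norm_num : (0:ℝ) ≤ 2), Real.rpow_natCast, one_div, inv_pow]

private lemma geo_sum' : Summable (fun n : ℕ => (1/2:ℝ)^(n+1)) := by
  have h : Summable (fun n : ℕ => (1/2:ℝ)^n) :=
    summable_geometric_of_lt_one (by norm_num) (by norm_num)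
  exact (h.mul_right (1/2)).congr (fun n => (pow_succ _ _).symm)

private lemma geo_tsum' : ∑' n : ℕ, (1/2:ℝ)^(n+1) = 1 := by
  have h : ∑' n : ℕ, (1/2:ℝ)^n = 2 := by
    rw [tsum_geometric_of_lt_one (by norm_num) (by norm_num)]; norm_num
  calc ∑' n : ℕ, (1/2:ℝ)^(n+1) = ∑' n : ℕ, (1/2:ℝ)^n * (1/2) :=
        tsum_congr (fun n => pow_succ _ _)
    _ = 1 := by rw [tsum_mul_right, h]; norm_num

private lemma g_summable {s : ℝ} (hs : 0 ≤ s) :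
    Summable (fun n : ℕ => (1 - Real.exp (-((2:ℝ)^(n+1) * s))) * (1/2:ℝ)^(n+1)) := by
  apply Summable.of_nonneg_of_le _ _ geo_sum'
  · intro n
    have hx : (0:ℝ) ≤ (2:ℝ)^(n+1) * s := by positivity
    exact mul_nonneg (exp_nn' hx) (by positivity)
  · intro n
    have h1 : 1 - Real.exp (-((2:ℝ)^(n+1) * s)) ≤ 1 := by
      have := Real.exp_pos (-((2:ℝ)^(n+1) * s)); linarith
    calc (1 - Real.exp (-((2:ℝ)^(n+1) * s))) * (1/2:ℝ)^(n+1)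
        ≤ 1 * (1/2:ℝ)^(n+1) := mul_le_mul_of_nonneg_right h1 (by positivity)
      _ = (1/2:ℝ)^(n+1) := one_mul _

private lemma key {s : ℝ} (hs : 0 < s) (N : ℕ) (h1 : (2:ℝ)^N * s ≤ 1)
    (h2 : 1 ≤ (2:ℝ)^(N+1) * s) :
    ((N:ℝ) - 2) * s ≤ (∑' n : ℕ, (1 - Real.exp (-(2:ℝ)^(n+1) * s)) * (1/2:ℝ)^(n+1))
    ∧ (∑' n : ℕ, (1 - Real.exp (-(2:ℝ)^(n+1) * s)) * (1/2:ℝ)^(n+1)) ≤ ((N:ℝ) + 2) * s := by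
  simp only [neg_mul]
  set g : ℕ → ℝ := fun n => (1 - Real.exp (-((2:ℝ)^(n+1) * s))) * (1/2:ℝ)^(n+1) with hg_def
  have hg : Summable g := g_summable hs.le
  have hgnn : ∀ n, 0 ≤ g n := by
    intro n
    have hx : (0:ℝ) ≤ (2:ℝ)^(n+1) * s := by positivity
    exact mul_nonneg (exp_nn' hx) (by positivity)
  have hmul : ∀ n : ℕ, (2:ℝ)^(n+1) * (1/2:ℝ)^(n+1) = 1 := by
    intro n; rw [← mul_pow]; norm_num
  have hpow2 : (2:ℝ)^(N+1) * s ≤ 2 := by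
    rw [pow_succ] at *; nlinarith
  constructor
  · -- lower bound
    have hsum_le : ∑ n ∈ Finset.range N, g n ≤ ∑' n, g n :=
      Summable.sum_le_tsum _ (fun n _ => hgnn n) hg
    have hterm : ∀ n ∈ Finset.range N, s - s^2 * (2:ℝ)^(n+1) ≤ g n := by
      intro n _
      have hx : (0:ℝ) ≤ (2:ℝ)^(n+1) * s := by positivity
      have hlb := exp_lb' hx
      have hstep : ((2:ℝ)^(n+1) * s - ((2:ℝ)^(n+1) * s)^2) * (1/2:ℝ)^(n+1) ≤ g n :=
        mul_le_mul_of_nonneg_right hlb (by positivity)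
      have heq : s - s^2 * (2:ℝ)^(n+1)
          = ((2:ℝ)^(n+1) * s - ((2:ℝ)^(n+1) * s)^2) * (1/2:ℝ)^(n+1) := by
        linear_combination (-(s - s^2 * (2:ℝ)^(n+1))) * hmul n
      linarith [hstep, heq.le]
    have hgeom : ∑ n ∈ Finset.range N, (2:ℝ)^(n+1) ≤ (2:ℝ)^(N+1) := by
      have h := geom_sum_eq (by norm_num : (2:ℝ) ≠ 1) N
      have h2' : ∑ n ∈ Finset.range N, (2:ℝ)^(n+1)
          = (∑ n ∈ Finset.range N, (2:ℝ)^n) * 2 := by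
        rw [Finset.sum_mul]; exact Finset.sum_congr rfl (fun n _ => pow_succ _ _)
      rw [h2', h, pow_succ]
      have : (0:ℝ) < (2:ℝ)^N := by positivity
      nlinarith
    have hsum_lb : ((N:ℝ)) * s - s^2 * (2:ℝ)^(N+1) ≤ ∑ n ∈ Finset.range N, g n := by
      calc ((N:ℝ)) * s - s^2 * (2:ℝ)^(N+1)
          ≤ ((N:ℝ)) * s - s^2 * ∑ n ∈ Finset.range N, (2:ℝ)^(n+1) := by
            nlinarith [sq_nonneg s]
        _ = ∑ n ∈ Finset.range N, (s - s^2 * (2:ℝ)^(n+1)) := by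
            rw [Finset.sum_sub_distrib, Finset.sum_const, Finset.card_range,
              ← Finset.mul_sum, nsmul_eq_mul]
        _ ≤ ∑ n ∈ Finset.range N, g n := Finset.sum_le_sum hterm
    have hsq : s^2 * (2:ℝ)^(N+1) ≤ 2 * s := by nlinarith
    nlinarith [hsum_le, hsum_lb]
  · -- upper bound
    have hsplit := Summable.sum_add_tsum_nat_add (f := g) N hg
    have hhead : ∑ n ∈ Finset.range N, g n ≤ (N:ℝ) * s := by
      have hle : ∀ n ∈ Finset.range N, g n ≤ s := by
        intro n _
        have hub := exp_ub' ((2:ℝ)^(n+1) * s)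
        calc g n ≤ ((2:ℝ)^(n+1) * s) * (1/2:ℝ)^(n+1) :=
              mul_le_mul_of_nonneg_right hub (by positivity)
          _ = s * ((2:ℝ)^(n+1) * (1/2:ℝ)^(n+1)) := by ring
          _ = s := by rw [hmul n, mul_one]
      calc ∑ n ∈ Finset.range N, g n ≤ ∑ n ∈ Finset.range N, s :=
            Finset.sum_le_sum hle
        _ = (N:ℝ) * s := by rw [Finset.sum_const, Finset.card_range, nsmul_eq_mul]
    have htail : (∑' n : ℕ, g (n + N)) ≤ 2 * s := by
      have hts : Summable (fun n : ℕ => g (n + N)) := (summable_nat_add_iff N).mpr hg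
      have hgs : Summable (fun n : ℕ => (1/2:ℝ)^(n + N + 1)) :=
        (summable_nat_add_iff N).mpr geo_sum'
      have hle : (∑' n : ℕ, g (n + N)) ≤ ∑' n : ℕ, (1/2:ℝ)^(n + N + 1) := by
        apply Summable.tsum_le_tsum _ hts hgs
        intro n
        have h1 : 1 - Real.exp (-((2:ℝ)^(n+N+1) * s)) ≤ 1 := by
          have := Real.exp_pos (-((2:ℝ)^(n+N+1) * s)); linarith
        calc g (n + N) ≤ 1 * (1/2:ℝ)^(n+N+1) := mul_le_mul_of_nonneg_right h1 (by positivity)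
          _ = (1/2:ℝ)^(n+N+1) := one_mul _
      have hcalc : ∑' n : ℕ, (1/2:ℝ)^(n + N + 1) = (1/2:ℝ)^N := by
        have hc : ∀ n : ℕ, (1/2:ℝ)^(n + N + 1) = (1/2:ℝ)^(n+1) * (1/2:ℝ)^N := by
          intro n; rw [← pow_add]; congr 1; omega
        rw [tsum_congr hc, tsum_mul_right, geo_tsum', one_mul]
      have hNs : (1/2:ℝ)^N ≤ 2 * s := by
        have hp : (0:ℝ) < (2:ℝ)^N := by positivity
        rw [div_pow, one_pow, div_le_iff₀ hp]
        rw [pow_succ] at h2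
        nlinarith
      linarith
    nlinarith [hsplit, hhead, htail]

/-- For the St. Petersburg distribution with `α = 1`,
`1 - F̂(s) ∼ s·log₂(1/s)` as `s ↓ 0`, where
`F̂(s) = Σ_{n ≥ 1} e^{-2ⁿ s} 2^{-n}`. -/
theorem statement_19 :
    Filter.Tendsto
      (fun s : ℝ =>
        (1 - ∑' n : ℕ, Real.exp (-(2:ℝ)^(n+1) * s) * (2:ℝ)^(-((n:ℝ)+1))) /
          (s * Real.logb 2 (1/s)))
      (nhdsWithin 0 (Set.Ioi 0)) (nhds 1) := by
  have hT : ∀ s : ℝ, 0 < s →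
      (1 - ∑' n : ℕ, Real.exp (-(2:ℝ)^(n+1) * s) * (2:ℝ)^(-((n:ℝ)+1)))
        = ∑' n : ℕ, (1 - Real.exp (-(2:ℝ)^(n+1) * s)) * (1/2:ℝ)^(n+1) := by
    intro s hs
    simp only [neg_mul]
    have hf : Summable (fun n : ℕ => Real.exp (-((2:ℝ)^(n+1) * s)) * (1/2:ℝ)^(n+1)) := by
      apply Summable.of_nonneg_of_le (fun n => by positivity) _ geo_sum'
      intro n
      have h1 : Real.exp (-((2:ℝ)^(n+1) * s)) ≤ Real.exp 0 := by
        apply Real.exp_le_exp.mpr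
        have : (0:ℝ) < (2:ℝ)^(n+1) * s := by positivity
        linarith
      rw [Real.exp_zero] at h1
      calc Real.exp (-((2:ℝ)^(n+1) * s)) * (1/2:ℝ)^(n+1)
          ≤ 1 * (1/2:ℝ)^(n+1) := mul_le_mul_of_nonneg_right h1 (by positivity)
        _ = (1/2:ℝ)^(n+1) := one_mul _
    have he : ∀ n : ℕ, Real.exp (-((2:ℝ)^(n+1) * s)) * (2:ℝ)^(-((n:ℝ)+1))
        = Real.exp (-((2:ℝ)^(n+1) * s)) * (1/2:ℝ)^(n+1) := by
      intro n; rw [e_eq]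
    have hsub := Summable.tsum_sub geo_sum' hf
    rw [geo_tsum'] at hsub
    rw [tsum_congr he, ← hsub]
    exact tsum_congr (fun n => by ring)
  have hLtop : Tendsto (fun s : ℝ => Real.logb 2 (1/s)) (nhdsWithin 0 (Set.Ioi 0)) atTop := by
    have h1 : Tendsto (fun s : ℝ => 1/s) (nhdsWithin 0 (Set.Ioi 0)) atTop := by
      simpa [one_div] using tendsto_inv_nhdsGT_zero
    have h2 : Tendsto (fun x : ℝ => Real.logb 2 x) atTop atTop :=
      Real.tendsto_logb_atTop (by norm_num)
    exact h2.comp h1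
  have h3L : Tendsto (fun s : ℝ => 3 / Real.logb 2 (1/s)) (nhdsWithin 0 (Set.Ioi 0)) (nhds 0) :=
    tendsto_const_nhds.div_atTop hLtop
  have hlow : Tendsto (fun s : ℝ => 1 - 3 / Real.logb 2 (1/s))
      (nhdsWithin 0 (Set.Ioi 0)) (nhds 1) := by
    simpa using tendsto_const_nhds.sub h3L
  have hhigh : Tendsto (fun s : ℝ => 1 + 3 / Real.logb 2 (1/s))
      (nhdsWithin 0 (Set.Ioi 0)) (nhds 1) := by
    simpa using tendsto_const_nhds.add h3L
  apply tendsto_of_tendsto_of_tendsto_of_le_of_le' hlow hhigh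
  all_goals {
    filter_upwards [Ioo_mem_nhdsGT_of_mem (by norm_num : (0:ℝ) ∈ Set.Ico 0 (1/2))] with s hs
    obtain ⟨hs0, hs12⟩ := hs
    have hs1 : (2:ℝ) < 1/s := by
      rw [lt_div_iff₀ hs0]; linarith
    set L := Real.logb 2 (1/s) with hL_def
    have hL1 : 1 < L := by
      have hlt : Real.logb 2 2 < Real.logb 2 (1/s) :=
        Real.logb_lt_logb (by norm_num) (by norm_num) hs1
      rw [Real.logb_self_eq_one (by norm_num)] at hlt
      exact hlt
    have hL0 : 0 < L := by linarith
    set N := ⌊L⌋₊ with hN_def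
    have hNle : (N:ℝ) ≤ L := Nat.floor_le hL0.le
    have hltN : L < (N:ℝ) + 1 := Nat.lt_floor_add_one L
    have hrL : (2:ℝ) ^ L = 1/s := Real.rpow_logb (by norm_num) (by norm_num) (by positivity)
    have hb1 : (2:ℝ)^N * s ≤ 1 := by
      have h := Real.rpow_le_rpow_of_exponent_le (by norm_num : (1:ℝ) ≤ 2) hNle
      rw [Real.rpow_natCast, hrL] at h
      calc (2:ℝ)^N * s ≤ (1/s) * s := mul_le_mul_of_nonneg_right h hs0.le
        _ = 1 := by field_simp
    have hb2 : 1 ≤ (2:ℝ)^(N+1) * s := by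
      have h := Real.rpow_le_rpow_of_exponent_le (by norm_num : (1:ℝ) ≤ 2) hltN.le
      rw [hrL, show ((N:ℝ)+1) = ((N+1 : ℕ) : ℝ) by push_cast; ring,
        Real.rpow_natCast] at h
      calc (1:ℝ) = (1/s) * s := by field_simp
        _ ≤ (2:ℝ)^(N+1) * s := mul_le_mul_of_nonneg_right h hs0.le
    obtain ⟨hk1, hk2⟩ := key hs0 N hb1 hb2
    rw [hT s hs0]
    set T := ∑' n : ℕ, (1 - Real.exp (-(2:ℝ)^(n+1) * s)) * (1/2:ℝ)^(n+1) with hT_def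
    have hsL : 0 < s * L := by positivity
    first
    | (rw [le_div_iff₀ hsL]
       have heq : (1 - 3 / L) * (s * L) = (L - 3) * s := by field_simp
       rw [heq]
       have hm : (L - 3) * s ≤ ((N:ℝ) - 2) * s :=
         mul_le_mul_of_nonneg_right (by linarith) hs0.le
       linarith)
    | (rw [div_le_iff₀ hsL]
       have heq : (1 + 3 / L) * (s * L) = (L + 3) * s := by field_simp
       rw [heq]
       have hm : ((N:ℝ) + 2) * s ≤ (L + 3) * s :=
         mul_le_mul_of_nonneg_right (by linarith) hs0.le
       linarith)
  }
end
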